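/- arXiv:2304.00937 — 4 statements merged into one kernel-verified Lean document; each statement's English description precedes it below -/
import Mathlib

section
/- For integers n ≥ 1 and r ≥ 0, the graph G = K_{n+r+1} + ((2r+1)K_1 ∪ K_2) is (n+r+1)-connected, has toughness t(G) = (n+r+1)/(2r+2) > (n+r+2)/(2(r+2)), and is not (P_{≥3},n)-factor critical avoidable. -/
open SimpleGraph

/-- Number of isolated vertices of a graph. -/
noncomputable def isolCount {V : Type*} (G : SimpleGraph V) : ℕ :=
  Nat.card {v : V // ∀ w, ¬ G.Adj v w}

/-- Number of connected components of a graph. -/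
noncomputable def compCount {V : Type*} (G : SimpleGraph V) : ℕ :=
  Nat.card G.ConnectedComponent

/-- Number of vertices of degree exactly one. -/
noncomputable def deg1Count {V : Type*} (G : SimpleGraph V) : ℕ :=
  Nat.card {v : V // Nat.card {w : V // G.Adj v w} = 1}

/-- A graph is factor-critical if deleting any vertex leaves a graph with a perfect matching. -/
def IsFactorCritical {V : Type*} (G : SimpleGraph V) : Prop :=
  ∀ v : V, ∃ M : (G.induce ({v}ᶜ : Set V)).Subgraph, M.IsPerfectMatching

/-- `G` is the corona of the factor-critical graph induced on `S` (with `3 ≤ |S|`):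
every vertex outside `S` is a pendant vertex attached to its own vertex of `S`. -/
def IsCoronaOfFactorCritical {V : Type*} (G : SimpleGraph V) (S : Set V) : Prop :=
  3 ≤ Nat.card S ∧ IsFactorCritical (G.induce S) ∧
  ∃ z : S ≃ ↥(Sᶜ), ∀ (y : S) (w : V), G.Adj ((z y : ↥(Sᶜ)) : V) w ↔ w = (y : V)

/-- A sun is `K₁`, `K₂`, or the corona of a factor-critical graph with at least 3 vertices. -/
def IsSunGraph {V : Type*} (G : SimpleGraph V) : Prop :=
  Nat.card V = 1 ∨ (Nat.card V = 2 ∧ G.Connected) ∨ ∃ S : Set V, IsCoronaOfFactorCritical G S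

/-- The number of sun components of a graph. -/
noncomputable def sunCount {V : Type*} (G : SimpleGraph V) : ℕ :=
  Nat.card {C : G.ConnectedComponent // IsSunGraph (G.induce C.supp)}

/-- `G` has a `P_{≥k}`-factor: a spanning subgraph all of whose components are paths
of order at least `k`. -/
def HasPathFactor {V : Type*} (G : SimpleGraph V) (k : ℕ) : Prop :=
  ∃ F : SimpleGraph V, F ≤ G ∧ ∀ C : F.ConnectedComponent,
    ∃ m : ℕ, k ≤ m ∧ Nonempty ((F.induce C.supp) ≃g pathGraph m)

/-- Vertex `k`-connectivity: more than `k` vertices, and removing fewer than `k`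
vertices leaves a connected graph. -/
def IsKConnected {V : Type*} (G : SimpleGraph V) (k : ℕ) : Prop :=
  k < Nat.card V ∧ ∀ S : Set V, Nat.card S < k → (G.induce (Sᶜ : Set V)).Connected

/-- The toughness of a graph, valued in `ℝ≥0∞` (infimum over the empty set is `∞`,
which covers complete graphs). -/
noncomputable def toughness {V : Type*} (G : SimpleGraph V) : ENNReal :=
  ⨅ X : {X : Set V // 2 ≤ compCount (G.induce (Xᶜ : Set V))},
    (Nat.card X.1 : ENNReal) / (compCount (G.induce ((X.1)ᶜ : Set V)) : ENNReal)

/-- The isolated toughness of a graph, valued in `ℝ≥0∞`. -/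
noncomputable def isolatedToughness {V : Type*} (G : SimpleGraph V) : ENNReal :=
  ⨅ X : {X : Set V // 2 ≤ isolCount (G.induce (Xᶜ : Set V))},
    (Nat.card X.1 : ENNReal) / (isolCount (G.induce ((X.1)ᶜ : Set V)) : ENNReal)

/-- `G` is `(P_{≥k}, n)`-factor critical avoidable: for every vertex set `W` of size `n`
and every edge `e` of `G − W`, the graph `G − W − e` has a `P_{≥k}`-factor. -/
def PathFactorCriticalAvoidable {V : Type*} (G : SimpleGraph V) (k n : ℕ) : Prop :=
  ∀ W : Set V, Nat.card W = n → ∀ e ∈ (G.induce (Wᶜ : Set V)).edgeSet,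
    HasPathFactor ((G.induce (Wᶜ : Set V)).deleteEdges {e}) k

/-- The join of two graphs: all edges between the two sides. -/
def graphJoin {α β : Type*} (G : SimpleGraph α) (H : SimpleGraph β) :
    SimpleGraph (α ⊕ β) where
  Adj x y :=
    match x, y with
    | Sum.inl a, Sum.inl b => G.Adj a b
    | Sum.inr a, Sum.inr b => H.Adj a b
    | _, _ => True
  symm := ⟨by rintro (a|a) (b|b) h <;> simp_all <;> exact h.symm⟩
  loopless := ⟨by rintro (a|a) h <;> simp_all⟩

/-- The disjoint union of two graphs. -/
def disjUnion {α β : Type*} (G : SimpleGraph α) (H : SimpleGraph β) :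
    SimpleGraph (α ⊕ β) where
  Adj x y :=
    match x, y with
    | Sum.inl a, Sum.inl b => G.Adj a b
    | Sum.inr a, Sum.inr b => H.Adj a b
    | _, _ => False
  symm := ⟨by rintro (a|a) (b|b) h <;> simp_all <;> exact h.symm⟩
  loopless := ⟨by rintro (a|a) h <;> simp_all⟩

/-- `b` disjoint copies of `K₂`. -/
def copiesK2 (b : ℕ) : SimpleGraph (Fin b × Fin 2) where
  Adj x y := x.1 = y.1 ∧ x.2 ≠ y.2
  symm := ⟨by rintro x y ⟨h1, h2⟩; exact ⟨h1.symm, h2.symm⟩⟩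
  loopless := ⟨by rintro x ⟨h1, h2⟩; exact h2 rfl⟩


section AuxStmt9

open SimpleGraph

abbrev Vnr (n r : ℕ) := Fin (n + r + 1) ⊕ (Fin (2 * r + 1) ⊕ Fin 2)

abbrev Gnr (n r : ℕ) : SimpleGraph (Vnr n r) :=
  graphJoin (⊤ : SimpleGraph (Fin (n + r + 1)))
    (disjUnion (⊥ : SimpleGraph (Fin (2 * r + 1))) (⊤ : SimpleGraph (Fin 2)))

lemma aux_comp_const {V β : Type*} (G : SimpleGraph V) (f : V → β)
    (h : ∀ v w, G.Adj v w → f v = f w) :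
    ∀ (u w : V), G.Reachable u w → f u = f w := by
  intro u w hr
  obtain ⟨p⟩ := hr
  induction p with
  | nil => rfl
  | cons ha _ ih => exact (h _ _ ha).trans ih

noncomputable def compLabel {V β : Type*} (G : SimpleGraph V) (f : V → β)
    (h : ∀ v w, G.Adj v w → f v = f w) : G.ConnectedComponent → β :=
  Quot.lift f (fun u w hr => aux_comp_const G f h u w hr)

@[simp] lemma compLabel_mk {V β : Type*} (G : SimpleGraph V) (f : V → β)
    (h : ∀ v w, G.Adj v w → f v = f w) (v : V) :
    compLabel G f h (G.connectedComponentMk v) = f v := rfl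

lemma aux_induce_connected_of_hub {V : Type*} (G : SimpleGraph V) (T : Set V) (v : V)
    (hv : v ∈ T) (h : ∀ u ∈ T, u ≠ v → G.Adj v u) : (G.induce T).Connected := by
  have key : ∀ u : T, (G.induce T).Reachable ⟨v, hv⟩ u := by
    rintro ⟨u, hu⟩
    by_cases h' : u = v
    · subst h'; rfl
    · exact (SimpleGraph.Adj.reachable (by simpa using h u hu h'))
  have : Nonempty T := ⟨⟨v, hv⟩⟩
  exact ⟨fun a b => (key a).symm.trans (key b)⟩

lemma aux_connected_compCount {V : Type*} (G : SimpleGraph V) (h : G.Connected) :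
    compCount G = 1 := by
  have h1 : Subsingleton G.ConnectedComponent := ⟨fun a b => by
    refine SimpleGraph.ConnectedComponent.ind₂ (fun u w => ?_) a b
    exact SimpleGraph.ConnectedComponent.sound (h.preconnected u w)⟩
  have h2 : Nonempty G.ConnectedComponent := ⟨SimpleGraph.connectedComponentMk _ h.nonempty.some⟩
  exact Nat.card_unique

lemma Gnr_induce_connected (n r : ℕ) (T : Set (Vnr n r)) (i : Fin (n + r + 1))
    (hi : Sum.inl i ∈ T) : ((Gnr n r).induce T).Connected := by
  apply aux_induce_connected_of_hub _ _ (Sum.inl i) hi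
  rintro (j | y) hu hne
  · exact fun hij => hne (by rw [hij])
  · trivial

/-- label function for right-side vertices -/
def rightLabel (n r : ℕ) : Vnr n r → (Fin (2 * r + 1) ⊕ Unit) :=
  Sum.elim (fun _ => Sum.inr ()) (Sum.elim (fun i => Sum.inl i) (fun _ => Sum.inr ()))

lemma rightLabel_const (n r : ℕ) (X : Set (Vnr n r)) (hX : Set.range Sum.inl ⊆ X) :
    ∀ v w : ↥(Xᶜ), ((Gnr n r).induce Xᶜ).Adj v w →
      rightLabel n r v.1 = rightLabel n r w.1 := by
  rintro ⟨(i | (a | j)), hv⟩ ⟨(i' | (a' | j')), hw⟩ hadj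
  · exact absurd (hX ⟨i, rfl⟩) hv
  · exact absurd (hX ⟨i, rfl⟩) hv
  · exact absurd (hX ⟨i, rfl⟩) hv
  · exact absurd (hX ⟨i', rfl⟩) hw
  · exact (hadj.elim)
  · exact (hadj.elim)
  · exact absurd (hX ⟨i', rfl⟩) hw
  · exact (hadj.elim)
  · rfl

lemma aux_compCount_le (n r : ℕ) (X : Set (Vnr n r)) (hX : Set.range Sum.inl ⊆ X) :
    compCount ((Gnr n r).induce Xᶜ) ≤ 2 * r + 2 := by
  have hinj : Function.Injective
      (compLabel _ _ (rightLabel_const n r X hX)) := by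
    intro C C'
    refine SimpleGraph.ConnectedComponent.ind₂ (fun u w => ?_) C C'
    obtain ⟨(i | (a | j)), hu⟩ := u <;> obtain ⟨(i' | (a' | j')), hw⟩ := w <;>
      intro h <;>
      first
        | exact absurd (hX ⟨_, rfl⟩) hu
        | exact absurd (hX ⟨_, rfl⟩) hw
        | simp only [compLabel_mk, rightLabel, Sum.elim_inl, Sum.elim_inr] at h
    · cases h
      rfl
    · exact absurd h (by simp)
    · exact absurd h (by simp)
    · by_cases hjj : j = j'
      · subst hjj; rfl
      · exact SimpleGraph.ConnectedComponent.sound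
          (SimpleGraph.Adj.reachable (by exact hjj))
  calc compCount ((Gnr n r).induce Xᶜ)
      ≤ Nat.card (Fin (2 * r + 1) ⊕ Unit) := Nat.card_le_card_of_injective _ hinj
    _ = 2 * r + 2 := by simp

lemma aux_compCount_eq (n r : ℕ) :
    compCount ((Gnr n r).induce (Set.range Sum.inl)ᶜ) = 2 * r + 2 := by
  refine le_antisymm (aux_compCount_le n r _ le_rfl) ?_
  have hmem : ∀ y : Fin (2 * r + 1) ⊕ Fin 2,
      (Sum.inr y : Vnr n r) ∈ (Set.range Sum.inl)ᶜ := by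
    rintro y ⟨i, h⟩; exact Sum.inl_ne_inr h
  set G' := (Gnr n r).induce (Set.range (Sum.inl : Fin (n+r+1) → Vnr n r))ᶜ with hG'
  let s : (Fin (2 * r + 1) ⊕ Unit) → G'.ConnectedComponent :=
    Sum.elim (fun i => G'.connectedComponentMk ⟨Sum.inr (Sum.inl i), hmem _⟩)
      (fun _ => G'.connectedComponentMk ⟨Sum.inr (Sum.inr 0), hmem _⟩)
  have hs : Function.Injective s := by
    have hsec : ∀ l, compLabel _ _ (rightLabel_const n r _ le_rfl) (s l) = l := by
      rintro (i | ⟨⟩) <;> rfl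
    intro a b hab
    rw [← hsec a, ← hsec b, hab]
  calc 2 * r + 2 = Nat.card (Fin (2 * r + 1) ⊕ Unit) := by simp
    _ ≤ compCount G' := Nat.card_le_card_of_injective _ hs

lemma aux_enn_div_lt_div {a b c d : ℕ} (hb : 0 < b) (hd : 0 < d) (h : a * d < c * b) :
    (a : ENNReal) / b < (c : ENNReal) / d := by
  have hb' : (b : ENNReal) ≠ 0 := by exact_mod_cast hb.ne'
  have hd' : (d : ENNReal) ≠ 0 := by exact_mod_cast hd.ne'
  have e : (c : ENNReal) / d * b = c * b / d := by
    rw [div_eq_mul_inv, div_eq_mul_inv]; ring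
  rw [ENNReal.div_lt_iff (Or.inl hb') (Or.inl (ENNReal.natCast_ne_top b)), e,
    ENNReal.lt_div_iff_mul_lt (Or.inl hd') (Or.inl (ENNReal.natCast_ne_top d))]
  exact_mod_cast h

lemma aux_path_factor_neighbors {V : Type*} (F : SimpleGraph V)
    (hcomp : ∀ C : F.ConnectedComponent, ∃ m : ℕ, 3 ≤ m ∧
      Nonempty ((F.induce C.supp) ≃g pathGraph m)) :
    (∀ v : V, ∃ u, F.Adj v u) ∧
    (∀ v u w x : V, F.Adj v u → F.Adj v w → F.Adj v x → u = w ∨ u = x ∨ w = x) := by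
  constructor
  · intro v
    set C := F.connectedComponentMk v with hC
    obtain ⟨m, hm, ⟨φ⟩⟩ := hcomp C
    have hv : v ∈ C.supp := (SimpleGraph.ConnectedComponent.mem_supp_iff _ _).2 rfl
    set p := φ ⟨v, hv⟩ with hp
    have : ∃ q : Fin m, (pathGraph m).Adj p q := by
      by_cases h : p.val + 1 < m
      · exact ⟨⟨p.val + 1, h⟩, by rw [SimpleGraph.pathGraph_adj]; left; rfl⟩
      · have hpv : p.val < m := p.2
        refine ⟨⟨p.val - 1, by omega⟩, by rw [SimpleGraph.pathGraph_adj]; right; simp; omega⟩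
    obtain ⟨q, hadj⟩ := this
    have hadj2 : (F.induce C.supp).Adj (φ.symm p) (φ.symm q) := φ.symm.map_rel_iff.mpr hadj
    rw [hp, RelIso.symm_apply_apply] at hadj2
    exact ⟨(φ.symm q).1, by exact hadj2⟩
  · intro v u w x hu hw hx
    set C := F.connectedComponentMk v with hC
    obtain ⟨m, hm, ⟨φ⟩⟩ := hcomp C
    have hv : v ∈ C.supp := (SimpleGraph.ConnectedComponent.mem_supp_iff _ _).2 rfl
    have hmem : ∀ y : V, F.Adj v y → y ∈ C.supp := fun y hy =>
      (SimpleGraph.ConnectedComponent.mem_supp_iff _ _).2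
        (SimpleGraph.ConnectedComponent.sound hy.symm.reachable)
    set v' : C.supp := ⟨v, hv⟩
    set u' : C.supp := ⟨u, hmem u hu⟩
    set w' : C.supp := ⟨w, hmem w hw⟩
    set x' : C.supp := ⟨x, hmem x hx⟩
    have pu : (pathGraph m).Adj (φ v') (φ u') := φ.map_rel_iff.mpr (by exact hu)
    have pw : (pathGraph m).Adj (φ v') (φ w') := φ.map_rel_iff.mpr (by exact hw)
    have px : (pathGraph m).Adj (φ v') (φ x') := φ.map_rel_iff.mpr (by exact hx)
    rw [SimpleGraph.pathGraph_adj] at pu pw px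
    have hval : (φ u').val = (φ w').val ∨ (φ u').val = (φ x').val ∨
        (φ w').val = (φ x').val := by omega
    have key : ∀ a b : C.supp, (φ a).val = (φ b).val → a.1 = b.1 := by
      intro a b hab
      exact congrArg Subtype.val (φ.injective (Fin.ext hab))
    rcases hval with h | h | h
    · exact Or.inl (key _ _ h)
    · exact Or.inr (Or.inl (key _ _ h))
    · exact Or.inr (Or.inr (key _ _ h))


lemma Gnr_adj_right (n r : ℕ) (a b : Fin (2 * r + 1) ⊕ Fin 2)
    (h : (Gnr n r).Adj (Sum.inr a) (Sum.inr b)) :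
    ∃ j j' : Fin 2, j ≠ j' ∧ a = Sum.inr j ∧ b = Sum.inr j' := by
  rcases a with a | j <;> rcases b with b | j'
  · exact (h : (⊥ : SimpleGraph (Fin (2 * r + 1))).Adj a b).elim
  · exact (h : False).elim
  · exact (h : False).elim
  · exact ⟨j, j', h, rfl, rfl⟩

end AuxStmt9

/-- Remark 4: sharpness of the connectivity condition in Theorem 7. -/
theorem stmt9 (n r : ℕ) (h : 1 ≤ n)
    (G : SimpleGraph (Fin (n + r + 1) ⊕ (Fin (2 * r + 1) ⊕ Fin 2)))
    (hG : G = graphJoin (⊤ : SimpleGraph (Fin (n + r + 1)))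
      (disjUnion (⊥ : SimpleGraph (Fin (2 * r + 1))) (⊤ : SimpleGraph (Fin 2)))) :
    IsKConnected G (n + r + 1) ∧
    toughness G = ((n : ENNReal) + r + 1) / (2 * (r : ENNReal) + 2) ∧
    ((n : ENNReal) + r + 1) / (2 * (r : ENNReal) + 2) >
      ((n : ENNReal) + r + 2) / (2 * ((r : ENNReal) + 2)) ∧
    ¬ PathFactorCriticalAvoidable G 3 n := by
  subst hG
  have hcast1 : ((n + r + 1 : ℕ) : ENNReal) = (n : ENNReal) + r + 1 := by push_cast; ring
  have hcast2 : ((2 * r + 2 : ℕ) : ENNReal) = 2 * (r : ENNReal) + 2 := by push_cast; ring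
  have hA : IsKConnected (Gnr n r) (n + r + 1) := by
    constructor
    · simp only [Nat.card_eq_fintype_card, Fintype.card_sum, Fintype.card_fin]
      omega
    · intro S hS
      have hex : ∃ i : Fin (n + r + 1), Sum.inl i ∉ S := by
        by_contra hc
        push_neg at hc
        have hinj : Function.Injective
            (fun i : Fin (n + r + 1) => (⟨Sum.inl i, hc i⟩ : S)) := by
          intro a b hab
          simpa using congrArg Subtype.val hab
        have hle := Nat.card_le_card_of_injective _ hinj
        have hfin : Nat.card (Fin (n + r + 1)) = n + r + 1 := by simp
        have hle2 : n + r + 1 ≤ Nat.card (↥S) := by rw [← hfin]; exact hle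
        omega
      obtain ⟨i, hi⟩ := hex
      exact Gnr_induce_connected n r Sᶜ i hi
  have hX0card : Nat.card (Set.range (Sum.inl : Fin (n + r + 1) → Vnr n r)) = n + r + 1 := by
    rw [Nat.card_congr (Equiv.ofInjective _ Sum.inl_injective).symm]; simp
  have hB : toughness (Gnr n r) = ((n : ENNReal) + r + 1) / (2 * (r : ENNReal) + 2) := by
    unfold toughness
    apply le_antisymm
    · refine le_trans (iInf_le _ ⟨Set.range Sum.inl, by rw [aux_compCount_eq]; omega⟩) ?_
      rw [hX0card, aux_compCount_eq, hcast1, hcast2]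
    · apply le_iInf
      rintro ⟨X, hX⟩
      have hsub : Set.range (Sum.inl : Fin (n + r + 1) → Vnr n r) ⊆ X := by
        rintro x ⟨i, rfl⟩
        by_contra hnot
        have hconn := Gnr_induce_connected n r Xᶜ i hnot
        have h1 := aux_connected_compCount _ hconn
        omega
      have h1 : n + r + 1 ≤ Nat.card X := by
        rw [← hX0card]; exact Nat.card_mono (Set.toFinite X) hsub
      have h2 := aux_compCount_le n r X hsub
      calc ((n : ENNReal) + r + 1) / (2 * (r : ENNReal) + 2)
          = ((n + r + 1 : ℕ) : ENNReal) / ((2 * r + 2 : ℕ) : ENNReal) := by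
            rw [hcast1, hcast2]
        _ ≤ _ := ENNReal.div_le_div (by exact_mod_cast h1) (by exact_mod_cast h2)
  have hC : ((n : ENNReal) + r + 1) / (2 * (r : ENNReal) + 2) >
      ((n : ENNReal) + r + 2) / (2 * ((r : ENNReal) + 2)) := by
    have e1 : (n : ENNReal) + r + 2 = ((n + r + 2 : ℕ) : ENNReal) := by push_cast; ring
    have e2 : 2 * ((r : ENNReal) + 2) = ((2 * (r + 2) : ℕ) : ENNReal) := by push_cast; ring
    rw [e1, e2, ← hcast1, ← hcast2]
    exact aux_enn_div_lt_div (by omega) (by omega) (by nlinarith)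
  have hD : ¬ PathFactorCriticalAvoidable (Gnr n r) 3 n := by
    intro hPFA
    classical
    set W : Set (Vnr n r) :=
      Set.range (fun i : Fin n => (Sum.inl (Fin.castLE (by omega) i) : Vnr n r)) with hWdef
    have hWinj : Function.Injective
        (fun i : Fin n => (Sum.inl (Fin.castLE (by omega : n ≤ n + r + 1) i) : Vnr n r)) := by
      intro a b hab
      exact Fin.castLE_injective _ (Sum.inl_injective hab)
    have hWcard : Nat.card W = n := by
      rw [Nat.card_congr (Equiv.ofInjective _ hWinj).symm]; simp
    have hmemr : ∀ y : Fin (2 * r + 1) ⊕ Fin 2, (Sum.inr y : Vnr n r) ∈ Wᶜ := by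
      rintro y ⟨i, h⟩; exact Sum.inl_ne_inr h
    have hedge : s((⟨Sum.inr (Sum.inr 0), hmemr _⟩ : ↥(Wᶜ)),
        (⟨Sum.inr (Sum.inr 1), hmemr _⟩ : ↥(Wᶜ)))
        ∈ ((Gnr n r).induce (Wᶜ : Set (Vnr n r))).edgeSet := by
      rw [SimpleGraph.mem_edgeSet]
      show (0 : Fin 2) ≠ 1
      decide
    obtain ⟨F, hFle, hcomp⟩ := hPFA W hWcard _ hedge
    obtain ⟨hex, htri⟩ := aux_path_factor_neighbors F hcomp
    letI : Fintype ↥(Wᶜ) := Fintype.ofFinite _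
    letI : DecidableRel F.Adj := Classical.decRel _
    set L : Finset ↥(Wᶜ) := Finset.univ.filter (fun v => v.val.isLeft = true) with hLdef
    set R : Finset ↥(Wᶜ) := Finset.univ.filter (fun v => v.val.isRight = true) with hRdef
    have hRL : ∀ v u : ↥(Wᶜ), F.Adj v u → v.val.isRight = true → u.val.isLeft = true := by
      intro v u hadj hv
      have hH := hFle hadj
      rw [SimpleGraph.deleteEdges_adj] at hH
      obtain ⟨hGadj, hne⟩ := hH
      obtain ⟨(i | a), hvm⟩ := v
      · simp at hv
      · obtain ⟨(i' | b), hum⟩ := u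
        · rfl
        · exfalso
          have hG' : (Gnr n r).Adj (Sum.inr a) (Sum.inr b) := hGadj
          obtain ⟨j, j', hjj, rfl, rfl⟩ := Gnr_adj_right n r a b hG'
          apply hne
          simp only [Set.mem_singleton_iff]
          fin_cases j <;> fin_cases j' <;> first
            | exact absurd rfl hjj
            | rfl
            | exact Sym2.eq_swap
    have hRcard : 2 * r + 3 ≤ R.card := by
      have hle : (Finset.univ : Finset (Fin (2 * r + 1) ⊕ Fin 2)).card ≤ R.card :=
        Finset.card_le_card_of_injOn
        (fun y : Fin (2 * r + 1) ⊕ Fin 2 => (⟨Sum.inr y, hmemr y⟩ : ↥(Wᶜ)))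
        (fun y _ => by exact Finset.mem_filter.2 ⟨Finset.mem_univ _, rfl⟩)
        (fun y₁ _ y₂ _ h => Sum.inr_injective (congrArg Subtype.val h))
      simp only [Finset.card_univ, Fintype.card_sum, Fintype.card_fin] at hle
      omega
    have hmemL : ∀ (v : ↥(Wᶜ)) (i : Fin (n + r + 1)), v.val = Sum.inl i → n ≤ i.val := by
      intro v i hvi
      by_contra hlt
      push_neg at hlt
      exact v.2 ⟨⟨i.val, hlt⟩, by rw [hvi]; exact congrArg Sum.inl (Fin.ext rfl)⟩
    have hsubcard : Fintype.card {i : Fin (n + r + 1) // n ≤ i.val} = r + 1 := by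
      have e : {i : Fin (n + r + 1) // n ≤ i.val} ≃ Fin (r + 1) :=
        { toFun := fun x => ⟨x.1.1 - n, by have := x.2; have := x.1.2; omega⟩
          invFun := fun j => ⟨⟨j.1 + n, by have := j.2; omega⟩, by simp⟩
          left_inv := fun x => Subtype.ext (Fin.ext (by have := x.2; simp; omega))
          right_inv := fun j => Fin.ext (by simp) }
      rw [Fintype.card_congr e, Fintype.card_fin]
    have hLcard : L.card ≤ r + 1 := by
      have hle : L.card ≤ (Finset.univ : Finset {i : Fin (n + r + 1) // n ≤ i.val}).card :=
        Finset.card_le_card_of_injOn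
        (fun v : ↥(Wᶜ) =>
          if h : ∃ i : Fin (n + r + 1), v.val = Sum.inl i then
            (⟨h.choose, hmemL v h.choose h.choose_spec⟩ : {i : Fin (n + r + 1) // n ≤ i.val})
          else ⟨⟨n, by omega⟩, le_rfl⟩)
        (fun v _ => Finset.mem_univ _)
        (fun v hv w hw hvw => by
          have hvL : ∃ i, v.val = Sum.inl i :=
            Sum.isLeft_iff.1 (Finset.mem_filter.1 (Finset.mem_coe.1 hv)).2
          have hwL : ∃ i, w.val = Sum.inl i :=
            Sum.isLeft_iff.1 (Finset.mem_filter.1 (Finset.mem_coe.1 hw)).2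
          beta_reduce at hvw
          rw [dif_pos hvL, dif_pos hwL] at hvw
          have h1 : hvL.choose = hwL.choose := congrArg Subtype.val hvw
          exact Subtype.ext (by rw [hvL.choose_spec, hwL.choose_spec, h1]))
      rw [Finset.card_univ, hsubcard] at hle
      exact hle
    have hstep1 : 2 * r + 3 ≤ ∑ v ∈ R, (L.filter (fun u => F.Adj v u)).card := by
      calc 2 * r + 3 ≤ R.card := hRcard
        _ = ∑ _v ∈ R, 1 := by simp
        _ ≤ _ := by
          refine Finset.sum_le_sum fun v hv => ?_
          obtain ⟨u, hu⟩ := hex v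
          have huL : u ∈ L := Finset.mem_filter.2 ⟨Finset.mem_univ _,
            hRL v u hu (Finset.mem_filter.1 hv).2⟩
          exact Finset.card_pos.2 ⟨u, Finset.mem_filter.2 ⟨huL, hu⟩⟩
    have hswap : ∑ v ∈ R, (L.filter (fun u => F.Adj v u)).card
        = ∑ u ∈ L, (R.filter (fun v => F.Adj u v)).card := by
      simp_rw [Finset.card_filter]
      rw [Finset.sum_comm]
      refine Finset.sum_congr rfl fun u _ => Finset.sum_congr rfl fun v _ => ?_
      exact if_congr (SimpleGraph.adj_comm F v u) rfl rfl
    have hstep2 : ∑ u ∈ L, (R.filter (fun v => F.Adj u v)).card ≤ 2 * (r + 1) := by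
      calc ∑ u ∈ L, (R.filter (fun v => F.Adj u v)).card
          ≤ ∑ _u ∈ L, 2 := by
            refine Finset.sum_le_sum fun u _ => ?_
            by_contra hgt
            push_neg at hgt
            obtain ⟨a, ha, b, hb, c, hc, hab, hac, hbc⟩ := Finset.two_lt_card.1 hgt
            have ha' := (Finset.mem_filter.1 ha).2
            have hb' := (Finset.mem_filter.1 hb).2
            have hc' := (Finset.mem_filter.1 hc).2
            rcases htri u a b c ha' hb' hc' with h | h | h
            exacts [hab h, hac h, hbc h]
        _ = 2 * L.card := by rw [Finset.sum_const, smul_eq_mul, mul_comm]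
        _ ≤ 2 * (r + 1) := Nat.mul_le_mul_left _ hLcard
    omega
  exact ⟨hA, hB, hC, hD⟩
end

section
/- For nonnegative integers n, r, the graph G = K_{n+r+2} + ((2r+4)K_2) is (n+r+2)-connected, has isolated toughness I(G) = (n+3(r+2))/(2(r+2)), and is not (P_{≥3},n)-factor critical avoidable. -/
open SimpleGraph

section myAux

lemma myNatdiv_le (a b c d : ℕ) (hb : b ≠ 0) (hd : d ≠ 0) (h : a * d ≤ c * b) :
    (a : ENNReal) / b ≤ (c : ENNReal) / d := by
  rw [ENNReal.div_le_iff_le_mul (Or.inl (by exact_mod_cast hb)) (Or.inl (by simp))]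
  rw [div_eq_mul_inv, mul_right_comm, ← div_eq_mul_inv]
  rw [ENNReal.le_div_iff_mul_le (Or.inl (by exact_mod_cast hd)) (Or.inl (by simp))]
  exact_mod_cast h

def flipRight {A B : Type*} : A ⊕ (B × Fin 2) → A ⊕ (B × Fin 2)
  | Sum.inl a => Sum.inl a
  | Sum.inr (j, c) => Sum.inr (j, c + 1)

lemma flipRight_invol {A B : Type*} (v : A ⊕ (B × Fin 2)) : flipRight (flipRight v) = v := by
  rcases v with a | ⟨j, c⟩
  · rfl
  · show Sum.inr (j, c + 1 + 1) = _
    congr 1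
    ext
    · rfl
    · fin_cases c <;> rfl

lemma flipRight_inj {A B : Type*} : Function.Injective (flipRight (A := A) (B := B)) :=
  Function.LeftInverse.injective flipRight_invol

variable {V : Type*} {F : SimpleGraph V}

lemma exists_adj_of_walk {x w : V} (p : F.Walk x w) (h : x ≠ w) : ∃ u, F.Adj x u := by
  cases p with
  | nil => exact absurd rfl h
  | cons h' _ => exact ⟨_, h'⟩

lemma walk_stay {x y : V} (hx : ∀ w, F.Adj x w → w = y)
    (hy : ∀ w, F.Adj y w → w = x) {w z : V} (p : F.Walk w z)
    (hw : w ∈ ({x, y} : Set V)) : z ∈ ({x, y} : Set V) := by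
  induction p with
  | nil => exact hw
  | @cons a b c hab pbc ih =>
    apply ih
    rcases hw with h | h
    · subst h; exact Or.inr (hx _ hab)
    · subst h; exact Or.inl (hy _ hab)

lemma supp_subset_pair {x y : V} (hx : ∀ w, F.Adj x w → w = y)
    (hy : ∀ w, F.Adj y w → w = x) : (F.connectedComponentMk x).supp ⊆ {x, y} := by
  intro w hw
  rw [SimpleGraph.ConnectedComponent.mem_supp_iff, SimpleGraph.ConnectedComponent.eq] at hw
  obtain ⟨p⟩ := hw
  exact walk_stay hx hy p.reverse (Or.inl rfl)

variable (hF : ∀ C : F.ConnectedComponent, ∃ m, 3 ≤ m ∧ Nonempty ((F.induce C.supp) ≃g pathGraph m))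
include hF

lemma card_supp (C : F.ConnectedComponent) : 3 ≤ Nat.card C.supp := by
  obtain ⟨m, hm, ⟨φ⟩⟩ := hF C
  have : Nat.card C.supp = Nat.card (Fin m) := Nat.card_congr φ.toEquiv
  rw [Nat.card_fin] at this; omega

lemma exists_neighbor (v : V) : ∃ w, F.Adj v w := by
  by_contra hc
  push_neg at hc
  have h3 := card_supp hF (F.connectedComponentMk v)
  have hsub : (F.connectedComponentMk v).supp ⊆ {v} := by
    intro w hw
    rw [SimpleGraph.ConnectedComponent.mem_supp_iff, SimpleGraph.ConnectedComponent.eq] at hw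
    obtain ⟨p⟩ := hw
    by_contra hne
    obtain ⟨u, hu⟩ := exists_adj_of_walk p.reverse (by simpa using fun h => hne h.symm)
    exact hc u hu
  have hle := Set.ncard_le_ncard hsub (Set.finite_singleton v)
  rw [Nat.card_coe_set_eq] at h3
  simp [Set.ncard_singleton] at hle
  omega

lemma no_K2 {x y : V} (hx : ∀ w, F.Adj x w → w = y)
    (hy : ∀ w, F.Adj y w → w = x) : False := by
  have h3 := card_supp hF (F.connectedComponentMk x)
  have hle := Set.ncard_le_ncard (supp_subset_pair hx hy) (Set.toFinite _)
  have h2 : ({x, y} : Set V).ncard ≤ 2 := by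
    apply le_trans (Set.ncard_insert_le _ _); simp [Set.ncard_singleton]
  rw [Nat.card_coe_set_eq] at h3
  omega

lemma degree_le_two (v : V) : Nat.card {w // F.Adj v w} ≤ 2 := by
  classical
  set C := F.connectedComponentMk v with hC
  obtain ⟨m, hm, ⟨φ⟩⟩ := hF C
  have hvmem : v ∈ C.supp := by rw [SimpleGraph.ConnectedComponent.mem_supp_iff]
  have hmem : ∀ w, F.Adj v w → w ∈ C.supp := by
    intro w hw
    rw [SimpleGraph.ConnectedComponent.mem_supp_iff, hC, SimpleGraph.ConnectedComponent.eq]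
    exact ⟨(hw.toWalk).reverse⟩
  have key : ∀ w₁ w₂ : {w // F.Adj v w},
      (((φ ⟨w₁.1, hmem _ w₁.2⟩ : Fin m) < φ ⟨v, hvmem⟩) ↔
        ((φ ⟨w₂.1, hmem _ w₂.2⟩ : Fin m) < φ ⟨v, hvmem⟩)) → w₁ = w₂ := by
    intro w₁ w₂ hiff
    have a₁ : (pathGraph m).Adj (φ ⟨w₁.1, hmem _ w₁.2⟩) (φ ⟨v, hvmem⟩) := by
      rw [φ.map_adj_iff]; simpa using w₁.2.symm
    have a₂ : (pathGraph m).Adj (φ ⟨w₂.1, hmem _ w₂.2⟩) (φ ⟨v, hvmem⟩) := by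
      rw [φ.map_adj_iff]; simpa using w₂.2.symm
    rw [pathGraph_adj] at a₁ a₂
    rw [Fin.lt_def, Fin.lt_def] at hiff
    have hval : ((φ ⟨w₁.1, hmem _ w₁.2⟩ : Fin m) : ℕ) = ((φ ⟨w₂.1, hmem _ w₂.2⟩ : Fin m) : ℕ) := by
      omega
    have := φ.toEquiv.injective (Fin.ext hval)
    exact Subtype.ext (by simpa [Subtype.ext_iff] using congrArg Subtype.val this)
  have : Function.Injective (fun w : {w // F.Adj v w} =>
      decide ((φ ⟨w.1, hmem _ w.2⟩ : Fin m) < φ ⟨v, hvmem⟩)) := by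
    intro w₁ w₂ h
    exact key w₁ w₂ (decide_eq_decide.mp h)
  calc Nat.card {w // F.Adj v w} ≤ Nat.card Bool := Nat.card_le_card_of_injective _ this
    _ = 2 := by simp

end myAux


/-- Remark 5: sharpness of the isolated toughness bound in Theorem 8. -/
theorem stmt11 (n r : ℕ)
    (G : SimpleGraph (Fin (n + r + 2) ⊕ (Fin (2 * r + 4) × Fin 2)))
    (hG : G = graphJoin (⊤ : SimpleGraph (Fin (n + r + 2))) (copiesK2 (2 * r + 4))) :
    IsKConnected G (n + r + 2) ∧
    isolatedToughness G = ((n : ENNReal) + 3 * ((r : ENNReal) + 2)) / (2 * ((r : ENNReal) + 2)) ∧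
    ¬ PathFactorCriticalAvoidable G 3 n := by
  refine ⟨?_, ?_, ?_⟩
  ·
    classical
    subst hG
    set V := Fin (n + r + 2) ⊕ (Fin (2 * r + 4) × Fin 2)
    set G := graphJoin (⊤ : SimpleGraph (Fin (n + r + 2))) (copiesK2 (2 * r + 4)) with hG
    have adjLL : ∀ a b : Fin (n+r+2), G.Adj (Sum.inl a) (Sum.inl b) ↔ a ≠ b := by
      intro a b; simp [hG, graphJoin]
    have adjLR : ∀ (a : Fin (n+r+2)) p, G.Adj (Sum.inr p) (Sum.inl a) := by
      intro a p; simp [hG, graphJoin]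
    constructor
    · simp [Nat.card_eq_fintype_card]
    · intro S hS
      have hex : ¬ ∀ a : Fin (n+r+2), Sum.inl a ∈ S := by
        intro hall
        have inj : Function.Injective (fun a : Fin (n+r+2) => (⟨Sum.inl a, hall a⟩ : S)) := by
          intro a b h
          simpa [Subtype.ext_iff] using h
        have := Nat.card_le_card_of_injective _ inj
        rw [Nat.card_eq_fintype_card, Fintype.card_fin] at this
        have hsame : Nat.card {x // x ∈ S} = Nat.card ↥S := rfl
        omega
      push_neg at hex
      obtain ⟨a, ha⟩ := hex
      have ha' : Sum.inl a ∈ (Sᶜ : Set V) := ha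
      have hreach : ∀ u : ↥(Sᶜ : Set V), (G.induce (Sᶜ : Set V)).Reachable u ⟨Sum.inl a, ha'⟩ := by
        intro u
        by_cases h : u = ⟨Sum.inl a, ha'⟩
        · rw [h]
        · apply SimpleGraph.Adj.reachable
          show G.Adj u.1 (Sum.inl a)
          obtain ⟨(b|p), hu⟩ := u
          · have hba : b ≠ a := fun e => h (by subst e; rfl)
            exact (adjLL b a).mpr hba
          · exact adjLR a p
      rw [connected_iff]
      exact ⟨fun u v => (hreach u).trans (hreach v).symm, ⟨⟨Sum.inl a, ha'⟩⟩⟩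
  ·
    classical
    subst hG
    set V := Fin (n + r + 2) ⊕ (Fin (2 * r + 4) × Fin 2) with hV
    set G := graphJoin (⊤ : SimpleGraph (Fin (n + r + 2))) (copiesK2 (2 * r + 4)) with hG
    have cardV : Nat.card V = (n + r + 2) + (2 * r + 4) * 2 := by
      simp [hV, Nat.card_eq_fintype_card]
    -- the target as a natural quotient
    have htarget : ((n : ENNReal) + 3 * ((r : ENNReal) + 2)) / (2 * ((r : ENNReal) + 2))
        = ((n + 3 * r + 6 : ℕ) : ENNReal) / ((2 * r + 4 : ℕ) : ENNReal) := by
      push_cast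
      ring_nf
    rw [htarget]
    -- ======== upper bound ========
    set X₀ : Set V := (Set.range (fun j : Fin (2 * r + 4) => (Sum.inr (j, 1) : V)))ᶜ with hX₀
    have hX₀c : X₀ᶜ = Set.range (fun j : Fin (2 * r + 4) => (Sum.inr (j, 1) : V)) := compl_compl _
    have hinj1 : Function.Injective (fun j : Fin (2 * r + 4) => (Sum.inr (j, 1) : V)) := by
      intro a b h; simpa using h
    have hcardX₀c : Nat.card ↥(X₀ᶜ) = 2 * r + 4 := by
      rw [hX₀c, Nat.card_range_of_injective hinj1]
      simp
    have hisolX₀ : isolCount (G.induce (X₀ᶜ : Set V)) = 2 * r + 4 := by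
      have hall : ∀ v w : ↥(X₀ᶜ), ¬ (G.induce (X₀ᶜ : Set V)).Adj v w := by
        rintro ⟨v, hv⟩ ⟨w, hw⟩ hadj
        rw [hX₀c] at hv hw
        obtain ⟨j, rfl⟩ := hv
        obtain ⟨k, rfl⟩ := hw
        have : G.Adj (Sum.inr (j,1)) (Sum.inr (k,1)) := hadj
        simp [hG, graphJoin, copiesK2] at this
      unfold isolCount
      rw [Nat.card_congr (Equiv.subtypeUnivEquiv (fun v => fun w => hall v w))]
      exact hcardX₀c
    have hcardX₀ : Nat.card ↥X₀ = n + 3 * r + 6 := by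
      have h := Set.ncard_add_ncard_compl X₀
      rw [Nat.card_coe_set_eq] at hcardX₀c ⊢
      omega
    have hX₀mem : 2 ≤ isolCount (G.induce (X₀ᶜ : Set V)) := by rw [hisolX₀]; omega
    apply le_antisymm
    · apply le_trans (iInf_le _ (⟨X₀, hX₀mem⟩ :
        {X : Set V // 2 ≤ isolCount (G.induce (Xᶜ : Set V))}))
      rw [hcardX₀, hisolX₀]
    -- ======== lower bound ========
    · apply le_iInf
      rintro ⟨X, hX⟩
      simp only
      set i := isolCount (G.induce (Xᶜ : Set V)) with hi
      -- isolated vertices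
      set I := {v : ↥(Xᶜ : Set V) // ∀ w, ¬ (G.induce (Xᶜ : Set V)).Adj v w} with hI
      have hcardI : Nat.card I = i := rfl
      -- every left vertex belongs to X
      have hleft : ∀ a : Fin (n + r + 2), (Sum.inl a : V) ∈ X := by
        intro a
        by_contra hmem
        have ha : (Sum.inl a : V) ∈ Xᶜ := hmem
        have hsame : ∀ v : I, (v.1.1 : V) = Sum.inl a := by
          rintro ⟨⟨v, hv⟩, hiso⟩
          by_contra hne
          apply hiso ⟨Sum.inl a, ha⟩
          show G.Adj v (Sum.inl a)
          rcases v with b | p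
          · have : b ≠ a := fun e => hne (by subst e; rfl)
            simp [hG, graphJoin, this]
          · simp [hG, graphJoin]
        have h1 : Nat.card I ≤ Nat.card Unit := Nat.card_le_card_of_injective (fun _ => ())
          (fun v w _ => Subtype.ext (Subtype.ext ((hsame v).trans (hsame w).symm)))
        simp only [Nat.card_unique] at h1
        omega
      -- isolated vertices are right vertices whose partner is in X
      have hiso : ∀ v : I, ∃ (j : Fin (2 * r + 4)) (c : Fin 2),
          (v.1.1 : V) = Sum.inr (j, c) ∧ (Sum.inr (j, c + 1) : V) ∈ X := by
        rintro ⟨⟨v, hv⟩, hisov⟩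
        rcases v with b | ⟨j, c⟩
        · exact absurd (hleft b) hv
        · refine ⟨j, c, rfl, ?_⟩
          by_contra hmem
          apply hisov ⟨Sum.inr (j, c + 1), hmem⟩
          show G.Adj (Sum.inr (j, c)) (Sum.inr (j, c + 1))
          have hne2 : ∀ c : Fin 2, c ≠ c + 1 := by decide
          have : c ≠ c + 1 := hne2 c
          simp [hG, graphJoin, copiesK2, this]
      -- injection (Fin (n+r+2)) ⊕ I → X
      have hbig : n + r + 2 + i ≤ Nat.card ↥X := by
        have hmap : ∀ z : (Fin (n + r + 2)) ⊕ I, (Sum.elim (fun a => (Sum.inl a : V))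
            (fun v => flipRight v.1.1) z) ∈ X := by
          rintro (a | v)
          · exact hleft a
          · obtain ⟨j, c, h1, h2⟩ := hiso v
            simp only [Sum.elim_inr, h1]
            exact h2
        have hinj : Function.Injective (fun z : (Fin (n + r + 2)) ⊕ I =>
            (⟨_, hmap z⟩ : ↥X)) := by
          rintro (a | v) (b | w) h
          · simp only [Subtype.mk.injEq, Sum.elim_inl, Sum.inl.injEq] at h
            rw [h]
          · exfalso
            obtain ⟨j, c, h1, _⟩ := hiso w
            simp only [Subtype.mk.injEq, Sum.elim_inl, Sum.elim_inr, h1] at h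
            exact (by simp [flipRight] at h)
          · exfalso
            obtain ⟨j, c, h1, _⟩ := hiso v
            simp only [Subtype.mk.injEq, Sum.elim_inl, Sum.elim_inr, h1] at h
            exact (by simp [flipRight] at h)
          · simp only [Subtype.mk.injEq, Sum.elim_inr] at h
            have h2 := flipRight_inj h
            congr 1
            ext
            · exact h2
        have hle := Nat.card_le_card_of_injective _ hinj
        rw [Nat.card_sum] at hle
        have hfin : Nat.card (Fin (n + r + 2)) = n + r + 2 := by simp
        have hsame : Nat.card {x // x ∈ X} = Nat.card ↥X := rfl
        omega
      -- i ≤ 2r + 4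
      have hismall : i ≤ 2 * r + 4 := by
        have hmap : ∀ v : I, ∃ j : Fin (2 * r + 4), ∃ c, (v.1.1 : V) = Sum.inr (j, c) := by
          intro v; obtain ⟨j, c, h1, _⟩ := hiso v; exact ⟨j, c, h1⟩
        set pr : I → Fin (2 * r + 4) := fun v => (hmap v).choose with hpr
        have hinj : Function.Injective pr := by
          intro v w h
          obtain ⟨c, hc⟩ := (hmap v).choose_spec
          obtain ⟨d, hd⟩ := (hmap w).choose_spec
          have h' : (hmap v).choose = (hmap w).choose := h
          by_cases hcd : c = d
          · refine Subtype.ext (Subtype.ext ?_)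
            rw [hc, hd, h', hcd]
          · exfalso
            obtain ⟨j', c', h1, h2⟩ := hiso v
            rw [hc] at h1
            have h1' := Sum.inr.inj h1
            have hj : (hmap v).choose = j' := congrArg Prod.fst h1'
            have hcc : c = c' := congrArg Prod.snd h1'
            have key2 : ∀ c d : Fin 2, c ≠ d → d = c + 1 := by decide
            have hd2 : d = c + 1 := key2 c d hcd
            have hwX : (w.1.1 : V) ∈ X := by
              rw [hd, hd2, ← h', hj, hcc]
              exact h2
            exact w.1.2 hwX
        have hle := Nat.card_le_card_of_injective _ hinj
        have hfin : Nat.card (Fin (2 * r + 4)) = 2 * r + 4 := by simp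
        omega
      have h2i : 2 ≤ i := hX
      apply myNatdiv_le _ _ _ _ (by omega) (by omega)
      nlinarith [hbig, hismall]
  ·
    classical
    subst hG
    set V := Fin (n + r + 2) ⊕ (Fin (2 * r + 4) × Fin 2) with hV
    set G := graphJoin (⊤ : SimpleGraph (Fin (n + r + 2))) (copiesK2 (2 * r + 4)) with hG
    intro hPFCA
    set W : Set V := Sum.inl '' {i : Fin (n + r + 2) | (i : ℕ) < n} with hW
    have hcardW : Nat.card ↥W = n := by
      rw [Nat.card_coe_set_eq, hW, Set.ncard_image_of_injective _ Sum.inl_injective]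
      rw [← Nat.card_coe_set_eq]
      have E : {i : Fin (n + r + 2) // (i : ℕ) < n} ≃ Fin n :=
        { toFun := fun i => ⟨i.1.1, i.2⟩
          invFun := fun j => ⟨⟨j.1, by omega⟩, j.2⟩
          left_inv := fun i => by ext; rfl
          right_inv := fun j => by ext; rfl }
      exact Nat.card_eq_of_equiv_fin E
    have hmemr : ∀ p : Fin (2 * r + 4) × Fin 2, (Sum.inr p : V) ∈ Wᶜ := by
      intro p; simp [hW]
    have hmeml : ∀ a : Fin (n + r + 2), n ≤ (a : ℕ) → (Sum.inl a : V) ∈ Wᶜ := by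
      intro a ha
      simp only [hW, Set.mem_compl_iff, Set.mem_image, Set.mem_setOf_eq, not_exists]
      rintro i ⟨hi, hia⟩
      have : i = a := Sum.inl_injective hia
      omega
    set j0 : Fin (2 * r + 4) := ⟨0, by omega⟩ with hj0
    set x0 : ↥(Wᶜ : Set V) := ⟨Sum.inr (j0, 0), hmemr _⟩ with hx0
    set y0 : ↥(Wᶜ : Set V) := ⟨Sum.inr (j0, 1), hmemr _⟩ with hy0
    have he : s(x0, y0) ∈ (G.induce (Wᶜ : Set V)).edgeSet := by
      rw [SimpleGraph.mem_edgeSet]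
      show G.Adj (Sum.inr (j0, 0)) (Sum.inr (j0, 1))
      simp [hG, graphJoin, copiesK2]
    obtain ⟨F, hFle, hFcomp⟩ := hPFCA W hcardW s(x0, y0) he
    haveI : Fintype ↥(Wᶜ : Set V) := Fintype.ofFinite _
    set R : Fin (2 * r + 4) × Fin 2 → ↥(Wᶜ : Set V) := fun p => ⟨Sum.inr p, hmemr p⟩ with hR
    have hRinj : Function.Injective R := fun p q h => Sum.inr.inj (congrArg Subtype.val h)
    set isLeft : ↥(Wᶜ : Set V) → Prop := fun u => ∃ a, u.1 = Sum.inl a with hisLeft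
    -- structure of F-neighbors of right vertices
    have hstep : ∀ (x u : ↥(Wᶜ : Set V)) (j : Fin (2 * r + 4)) (c : Fin 2), x.1 = Sum.inr (j, c) →
        F.Adj x u → isLeft u ∨ u = R (j, c + 1) := by
      intro x u j c hx hadj
      have h1 := hFle hadj
      rw [SimpleGraph.deleteEdges_adj] at h1
      have h2 : G.Adj x.1 u.1 := h1.1
      obtain ⟨(a | q), hu⟩ := u
      · exact Or.inl ⟨a, rfl⟩
      · right
        rw [hx] at h2
        have h3 : j = q.1 ∧ c ≠ q.2 := by
          simpa [hG, graphJoin, copiesK2] using h2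
        have hq2 : q.2 = c + 1 := by
          have h4 : ∀ c d : Fin 2, c ≠ d → d = c + 1 := by decide
          exact h4 _ _ h3.2
        apply Subtype.ext
        show Sum.inr q = Sum.inr (j, c + 1)
        rw [show q = (j, q.2) from Prod.ext h3.1.symm rfl, hq2]
    -- neighbors of pair j0 are all left (the pair edge is deleted)
    have hstep0 : ∀ (x u : ↥(Wᶜ : Set V)) (c : Fin 2), x.1 = Sum.inr (j0, c) →
        F.Adj x u → isLeft u := by
      intro x u c hx hadj
      rcases hstep x u j0 c hx hadj with h | h
      · exact h
      · exfalso
        have h1 := hFle hadj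
        rw [SimpleGraph.deleteEdges_adj] at h1
        apply h1.2
        simp only [Set.mem_singleton_iff]
        have hxval : x = R (j0, c) := Subtype.ext hx
        subst h hxval
        fin_cases c
        · rfl
        · show s(R (j0, 1), R (j0, 1 + 1)) = s(x0, y0)
          have h5 : (1 + 1 : Fin 2) = 0 := rfl
          rw [h5, Sym2.eq_swap]
    -- count of left vertices
    have hNleft : Nat.card {u : ↥(Wᶜ : Set V) // isLeft u} = r + 2 := by
      let g : Fin (r + 2) → {u : ↥(Wᶜ : Set V) // isLeft u} := fun k =>
        ⟨⟨Sum.inl ⟨n + k.1, by omega⟩, hmeml _ (by simp)⟩, ⟨_, rfl⟩⟩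
      have hbij : Function.Bijective g := by
        constructor
        · intro k₁ k₂ h
          have h2 : (Sum.inl (⟨n + k₁.1, by omega⟩ : Fin (n + r + 2)) : V)
              = Sum.inl (⟨n + k₂.1, by omega⟩ : Fin (n + r + 2)) := congrArg (fun z => z.1.1) h
          have h3 := congrArg Fin.val (Sum.inl_injective h2)
          simp only at h3
          exact Fin.ext (by omega)
        · rintro ⟨⟨(b | q), hv⟩, a, ha⟩
          · have hb : n ≤ (b : ℕ) := by
              by_contra hlt
              exact hv ⟨b, show (b : ℕ) < n by omega, rfl⟩
            refine ⟨⟨(b : ℕ) - n, by omega⟩, Subtype.ext (Subtype.ext ?_)⟩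
            show (Sum.inl ⟨n + ((b : ℕ) - n), _⟩ : V) = Sum.inl b
            congr 1
            apply Fin.ext
            show n + ((b : ℕ) - n) = (b : ℕ)
            omega
          · exact absurd ha (by simp)
      exact Nat.card_eq_of_equiv_fin (Equiv.ofBijective g hbij).symm
    have hLcard : (Finset.univ.filter isLeft).card = r + 2 := by
      rw [← hNleft, Nat.card_eq_fintype_card, Fintype.card_subtype]
    -- the incidence count: f x = number of left F-neighbors of x
    set f : ↥(Wᶜ : Set V) → ℕ := fun x =>
      (Finset.univ.filter (fun u => isLeft u ∧ F.Adj x u)).card with hf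
    have hf1 : ∀ (x u : ↥(Wᶜ : Set V)), F.Adj x u → isLeft u → 1 ≤ f x := by
      intro x u hadj hu
      refine Finset.card_pos.mpr ⟨u, ?_⟩
      simp [hu, hadj]
    -- upper bound
    have hdeg : ∀ u : ↥(Wᶜ : Set V), (Finset.univ.filter (fun x => F.Adj u x)).card ≤ 2 := by
      intro u
      have := degree_le_two hFcomp u
      rwa [Nat.card_eq_fintype_card, Fintype.card_subtype] at this
    have hper : ∀ u : ↥(Wᶜ : Set V),
        (∑ p : Fin (2 * r + 4) × Fin 2, if isLeft u ∧ F.Adj (R p) u then 1 else 0)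
          ≤ (if isLeft u then 2 else 0) := by
      intro u
      by_cases hu : isLeft u
      · simp only [hu, if_true, true_and]
        calc (∑ p : Fin (2 * r + 4) × Fin 2, if F.Adj (R p) u then 1 else 0)
            = (Finset.univ.filter (fun p => F.Adj (R p) u)).card :=
              (Finset.card_filter _ _).symm
          _ ≤ (Finset.univ.filter (fun x => F.Adj u x)).card := by
              apply Finset.card_le_card_of_injOn R
              · intro p hp
                simp only [Finset.coe_filter, Finset.mem_coe, Set.mem_setOf_eq, Finset.mem_filter, Finset.mem_univ, true_and] at hp ⊢
                exact hp.symm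
              · exact hRinj.injOn
          _ ≤ 2 := hdeg u
      · simp [hu]
    have hupper : (∑ p : Fin (2 * r + 4) × Fin 2, f (R p)) ≤ 2 * (r + 2) := by
      calc (∑ p : Fin (2 * r + 4) × Fin 2, f (R p))
          = ∑ p : Fin (2 * r + 4) × Fin 2, ∑ u : ↥(Wᶜ : Set V),
              (if isLeft u ∧ F.Adj (R p) u then 1 else 0) := by
            simp only [hf, Finset.card_filter]
        _ = ∑ u : ↥(Wᶜ : Set V), ∑ p : Fin (2 * r + 4) × Fin 2,
              (if isLeft u ∧ F.Adj (R p) u then 1 else 0) := Finset.sum_comm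
        _ ≤ ∑ u : ↥(Wᶜ : Set V), (if isLeft u then 2 else 0) :=
            Finset.sum_le_sum (fun u _ => hper u)
        _ = ∑ u ∈ Finset.univ.filter isLeft, 2 := (Finset.sum_filter _ _).symm
        _ = 2 * (r + 2) := by rw [Finset.sum_const, hLcard, smul_eq_mul, mul_comm]
    -- lower bound
    have hzero1 : (0 : Fin 2) + 1 = 1 := rfl
    have hpair : ∀ j : Fin (2 * r + 4), 1 ≤ f (R (j, 0)) + f (R (j, 1)) := by
      intro j
      by_cases hadj : F.Adj (R (j, 0)) (R (j, 1))
      · by_contra hle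
        push_neg at hle
        have hz0 : f (R (j, 0)) = 0 := by omega
        have hz1 : f (R (j, 1)) = 0 := by omega
        have h0 : ∀ w, F.Adj (R (j, 0)) w → w = R (j, 1) := by
          intro w hw
          rcases hstep (R (j, 0)) w j 0 rfl hw with h | h
          · exact absurd (hf1 _ _ hw h) (by omega)
          · rw [h, hzero1]
        have h1 : ∀ w, F.Adj (R (j, 1)) w → w = R (j, 0) := by
          intro w hw
          rcases hstep (R (j, 1)) w j 1 rfl hw with h | h
          · exact absurd (hf1 _ _ hw h) (by omega)
          · rw [h]
            have : (1 + 1 : Fin 2) = 0 := rfl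
            rw [this]
        exact (no_K2 hFcomp h0 h1).elim
      · obtain ⟨u, hu⟩ := exists_neighbor hFcomp (R (j, 0))
        rcases hstep (R (j, 0)) u j 0 rfl hu with h | h
        · have := hf1 _ _ hu h; omega
        · rw [h, hzero1] at hu
          exact absurd hu hadj
    have hpair0 : 2 ≤ f (R (j0, 0)) + f (R (j0, 1)) := by
      obtain ⟨u, hu⟩ := exists_neighbor hFcomp (R (j0, 0))
      obtain ⟨w, hw⟩ := exists_neighbor hFcomp (R (j0, 1))
      have h1 := hf1 _ _ hu (hstep0 (R (j0, 0)) u 0 rfl hu)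
      have h2 := hf1 _ _ hw (hstep0 (R (j0, 1)) w 1 rfl hw)
      omega
    have hlower : 2 * r + 5 ≤ (∑ p : Fin (2 * r + 4) × Fin 2, f (R p)) := by
      have hsplit : (∑ p : Fin (2 * r + 4) × Fin 2, f (R p))
          = ∑ j : Fin (2 * r + 4), (f (R (j, 0)) + f (R (j, 1))) := by
        rw [Fintype.sum_prod_type]
        refine Finset.sum_congr rfl (fun j _ => ?_)
        exact Fin.sum_univ_two _
      rw [hsplit]
      rw [← Finset.add_sum_erase _ _ (Finset.mem_univ j0)]
      have hrest : (Finset.univ.erase j0).card • 1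
          ≤ ∑ j ∈ Finset.univ.erase j0, (f (R (j, 0)) + f (R (j, 1))) :=
        Finset.card_nsmul_le_sum _ _ _ (fun j _ => hpair j)
      have hcard : (Finset.univ.erase j0).card = 2 * r + 3 := by
        rw [Finset.card_erase_of_mem (Finset.mem_univ _)]
        simp
      rw [hcard] at hrest
      simp only [smul_eq_mul, mul_one] at hrest
      omega
    omega
end

section
/- For integers n ≥ 1 and r ≥ 0, the graph G = K_{n+r+1} + ((2r+2)K_2) is (n+r+1)-connected, satisfies I(G) = (n+3(r+1))/(2(r+1)) > (n+3(r+2))/(2(r+2)), and is not (P_{≥3},n)-factor critical avoidable. -/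
open SimpleGraph

abbrev V' (n r : ℕ) := Fin (n + r + 1) ⊕ (Fin (2 * r + 2) × Fin 2)

theorem part1 (n r : ℕ)
    (G : SimpleGraph (V' n r))
    (hG : G = graphJoin (⊤ : SimpleGraph (Fin (n + r + 1))) (copiesK2 (2 * r + 2))) :
    IsKConnected G (n + r + 1) := by
  subst hG
  constructor
  · simp [Nat.card_eq_fintype_card]
  · intro S hS
    -- find a left vertex not in S
    have hex : ∃ a : Fin (n + r + 1), (Sum.inl a : V' n r) ∉ S := by
      by_contra hall
      push_neg at hall
      have : Nat.card (Fin (n + r + 1)) ≤ Nat.card S :=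
        Nat.card_le_card_of_injective (fun a => ⟨Sum.inl a, hall a⟩)
          (fun a b hab => by simpa using congrArg Subtype.val hab)
      rw [Nat.card_eq_fintype_card (α := Fin (n + r + 1)), Fintype.card_fin] at this; omega
    obtain ⟨a, ha⟩ := hex
    have adj : ∀ v : ↥(Sᶜ), v.1 ≠ Sum.inl a →
        (graphJoin (⊤ : SimpleGraph (Fin (n + r + 1))) (copiesK2 (2 * r + 2))).Adj v.1 (Sum.inl a) := by
      rintro ⟨(b | p), hv⟩ hne
      · have : b ≠ a := fun h => hne (by simp [h])
        simpa [graphJoin] using this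
      · simp [graphJoin]
    rw [SimpleGraph.connected_iff]
    refine ⟨?_, ⟨⟨Sum.inl a, ha⟩⟩⟩
    intro u v
    have key : ∀ w : ↥(Sᶜ), ((graphJoin (⊤ : SimpleGraph (Fin (n + r + 1))) (copiesK2 (2 * r + 2))).induce Sᶜ).Reachable w ⟨Sum.inl a, ha⟩ := by
      intro w
      by_cases hw : w.1 = Sum.inl a
      · have : w = ⟨Sum.inl a, ha⟩ := Subtype.ext hw
        rw [this]
      · exact SimpleGraph.Adj.reachable (by exact adj w hw)
    exact (key u).trans (key v).symm

lemma fin2_ne_succ (i : Fin 2) : i ≠ i + 1 := by fin_cases i <;> decide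

theorem part2 (n r : ℕ)
    (G : SimpleGraph (Fin (n + r + 1) ⊕ (Fin (2 * r + 2) × Fin 2)))
    (hG : G = graphJoin (⊤ : SimpleGraph (Fin (n + r + 1))) (copiesK2 (2 * r + 2))) :
    isolatedToughness G =
      ((n : ENNReal) + 3 * ((r : ENNReal) + 1)) / (2 * ((r : ENNReal) + 1)) := by
  subst hG
  set J := graphJoin (⊤ : SimpleGraph (Fin (n + r + 1))) (copiesK2 (2 * r + 2)) with hJ
  have e1 : ((n : ENNReal) + 3 * ((r : ENNReal) + 1)) = ((n + 3*r+3 : ℕ) : ENNReal) := by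
    push_cast; ring
  have e2 : (2 * ((r : ENNReal) + 1)) = ((2*r+2 : ℕ) : ENNReal) := by push_cast; ring
  rw [e1, e2]
  -- the witness set
  have hfinj : Function.Injective
      (fun x : Fin (n+r+1) ⊕ Fin (2*r+2) =>
        (Sum.map id (fun c => (c, (0 : Fin 2))) x : V' n r)) := by
    rintro (a|c) (b|d) hx <;> simp_all
  set X₀ : Set (V' n r) := Set.range (fun x : Fin (n+r+1) ⊕ Fin (2*r+2) =>
        (Sum.map id (fun c => (c, (0 : Fin 2))) x : V' n r)) with hX₀
  have hX₀card : Nat.card X₀ = n + 3*r + 3 := by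
    rw [hX₀, Nat.card_range_of_injective hfinj, Nat.card_sum]
    simp; omega
  have hX₀c : X₀ᶜ = Set.range (fun c : Fin (2*r+2) => (Sum.inr (c, (1:Fin 2)) : V' n r)) := by
    ext x
    constructor
    · intro hx
      rcases x with a | ⟨c, i⟩
      · exact absurd ⟨Sum.inl a, rfl⟩ hx
      · fin_cases i
        · exact absurd ⟨Sum.inr c, rfl⟩ hx
        · exact ⟨c, rfl⟩
    · rintro ⟨c, rfl⟩ ⟨(a|d), hx⟩
      · simp at hx
      · simp only [Sum.map_inr, Sum.inr.injEq, Prod.mk.injEq] at hx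
        exact absurd hx.2 (by decide)
  have hX₀iso : ∀ v : ↥(X₀ᶜ), ∀ w : ↥(X₀ᶜ), ¬ (J.induce (X₀ᶜ : Set (V' n r))).Adj v w := by
    rintro ⟨v, hv⟩ ⟨w, hw⟩ hadj
    rw [hX₀c] at hv hw
    obtain ⟨c, rfl⟩ := hv
    obtain ⟨d, rfl⟩ := hw
    have : (copiesK2 (2*r+2)).Adj (c,1) (d,1) := hadj
    simp [copiesK2] at this
  have hX₀isol : isolCount (J.induce (X₀ᶜ : Set (V' n r))) = 2*r + 2 := by
    unfold isolCount
    rw [Nat.card_congr (Equiv.subtypeUnivEquiv (fun v => hX₀iso v))]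
    have h2 : Function.Injective (fun c : Fin (2*r+2) => (Sum.inr (c, (1:Fin 2)) : V' n r)) := by
      intro a b hab
      simpa using hab
    calc Nat.card ↥(X₀ᶜ) = Nat.card (Fin (2*r+2)) := by
          rw [hX₀c, Nat.card_range_of_injective h2]
      _ = 2*r+2 := by simp
  -- lower bound
  have lower : ∀ X : {X : Set (V' n r) // 2 ≤ isolCount (J.induce (Xᶜ : Set (V' n r)))},
      ((n + 3*r+3 : ℕ) : ENNReal) / ((2*r+2 : ℕ) : ENNReal) ≤
      (Nat.card X.1 : ENNReal) / (isolCount (J.induce ((X.1)ᶜ : Set (V' n r))) : ENNReal) := by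
    rintro ⟨X, hX⟩
    set k := isolCount (J.induce (Xᶜ : Set (V' n r))) with hk
    set Iso := {v : ↥(Xᶜ) // ∀ w, ¬ (J.induce (Xᶜ : Set (V' n r))).Adj v w} with hIso
    have hkcard : Nat.card Iso = k := rfl
    have : Nontrivial Iso := Finite.one_lt_card_iff_nontrivial.mp (by omega)
    -- every isolated vertex is a right vertex
    have hright : ∀ u : Iso, ∃ c i, (u.1 : V' n r) = Sum.inr (c, i) := by
      intro u
      rcases hu : (u.1 : V' n r) with a | ⟨c, i⟩
      · exfalso
        obtain ⟨w, hw⟩ := exists_ne u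
        have hadj : ¬ J.Adj (u.1 : V' n r) (w.1 : V' n r) := u.2 w.1
        rcases hw2 : (w.1 : V' n r) with b | p
        · have hab : a ≠ b := by
            intro hab
            apply hw.symm
            apply Subtype.ext; apply Subtype.ext
            rw [hw2, hu, hab]
          exact hadj (by rw [hu, hw2]; simpa [hJ, graphJoin] using hab)
        · exact hadj (by rw [hu, hw2]; simp [hJ, graphJoin])
      · exact ⟨c, i, rfl⟩
    choose cIdx iIdx hIdx using hright
    -- the partner of each isolated vertex is in X
    have hpart : ∀ u : Iso, (Sum.inr (cIdx u, iIdx u + 1) : V' n r) ∈ X := by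
      intro u
      by_contra hmem
      apply u.2 ⟨Sum.inr (cIdx u, iIdx u + 1), hmem⟩
      show J.Adj (u.1 : V' n r) (Sum.inr (cIdx u, iIdx u + 1))
      rw [hIdx u]
      show (cIdx u = cIdx u ∧ iIdx u ≠ iIdx u + 1)
      exact ⟨rfl, fin2_ne_succ _⟩
    -- every left vertex is in X
    have hleft : ∀ a : Fin (n+r+1), (Sum.inl a : V' n r) ∈ X := by
      intro a
      by_contra hmem
      obtain ⟨u⟩ : Nonempty Iso := inferInstance
      apply u.2 ⟨Sum.inl a, hmem⟩
      show J.Adj (u.1 : V' n r) (Sum.inl a)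
      rw [hIdx u]
      show True
      trivial
    -- injection into X
    have hcardX : n + r + 1 + k ≤ Nat.card X := by
      have hinj : Function.Injective
          (fun x : Fin (n+r+1) ⊕ Iso =>
            (Sum.elim (fun a => (⟨Sum.inl a, hleft a⟩ : ↥X))
              (fun u => (⟨Sum.inr (cIdx u, iIdx u + 1), hpart u⟩ : ↥X)) x)) := by
        rintro (a|u) (b|w) hx
        · simpa using hx
        · simp at hx
        · simp at hx
        · simp only [Sum.elim_inr, Subtype.mk.injEq, Sum.inr.injEq, Prod.mk.injEq] at hx
          obtain ⟨hc, hi⟩ := hx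
          have hi' : iIdx u = iIdx w := add_right_cancel hi
          have : (u.1 : V' n r) = (w.1 : V' n r) := by
            rw [hIdx u, hIdx w, hc, hi']
          congr 1
          exact Subtype.ext (Subtype.ext this)
      have h3 := Nat.card_le_card_of_injective _ hinj
      rw [Nat.card_sum, hkcard] at h3
      simpa using h3
    -- k ≤ 2r+2
    have hkle : k ≤ 2*r + 2 := by
      have hinj : Function.Injective cIdx := by
        intro u w hx
        by_cases hi : iIdx u = iIdx w
        · have : (u.1 : V' n r) = (w.1 : V' n r) := by
            rw [hIdx u, hIdx w, hx, hi]
          exact Subtype.ext (Subtype.ext this)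
        · exfalso
          apply u.2 w.1
          show J.Adj (u.1 : V' n r) (w.1 : V' n r)
          rw [hIdx u, hIdx w]
          show (cIdx u = cIdx w ∧ iIdx u ≠ iIdx w)
          exact ⟨hx, hi⟩
      have h3 := Nat.card_le_card_of_injective cIdx hinj
      rw [hkcard] at h3
      simpa using h3
    have hk0 : (k : ENNReal) ≠ 0 := by
      simp only [ne_eq, Nat.cast_eq_zero]; omega
    have hktop : (k : ENNReal) ≠ ⊤ := ENNReal.natCast_ne_top k
    -- arithmetic
    calc ((n + 3*r+3 : ℕ) : ENNReal) / ((2*r+2 : ℕ) : ENNReal)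
        = ((n+r+1 : ℕ) : ENNReal) / ((2*r+2 : ℕ) : ENNReal) + 1 := by
          rw [show ((n + 3*r+3 : ℕ) : ENNReal) = ((n+r+1:ℕ) : ENNReal) + ((2*r+2:ℕ):ENNReal) by
            push_cast; ring]
          rw [ENNReal.add_div, ENNReal.div_self (by simp) (ENNReal.natCast_ne_top _)]
      _ ≤ ((n+r+1 : ℕ) : ENNReal) / (k : ENNReal) + 1 := by
          gcongr <;> exact_mod_cast hkle
      _ = ((n+r+1+k : ℕ) : ENNReal) / (k : ENNReal) := by
          rw [show ((n+r+1+k : ℕ) : ENNReal) = ((n+r+1:ℕ) : ENNReal) + (k:ENNReal) by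
            push_cast; ring]
          rw [ENNReal.add_div, ENNReal.div_self hk0 hktop]
      _ ≤ (Nat.card X : ENNReal) / (k : ENNReal) := by
          gcongr <;> exact_mod_cast hcardX
  -- conclude
  apply le_antisymm
  · apply iInf_le_of_le ⟨X₀, by rw [hX₀isol]; omega⟩
    rw [hX₀card, hX₀isol]
  · exact le_iInf lower

theorem part3 (n r : ℕ) (h : 1 ≤ n) :
    ((n : ENNReal) + 3 * ((r : ENNReal) + 1)) / (2 * ((r : ENNReal) + 1)) >
      ((n : ENNReal) + 3 * ((r : ENNReal) + 2)) / (2 * ((r : ENNReal) + 2)) := by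
  have e1 : ((n : ENNReal) + 3 * ((r : ENNReal) + 1)) = ((n + 3*(r+1) : ℕ) : ENNReal) := by
    push_cast; ring
  have e2 : (2 * ((r : ENNReal) + 1)) = ((2*(r+1) : ℕ) : ENNReal) := by push_cast; ring
  have e3 : ((n : ENNReal) + 3 * ((r : ENNReal) + 2)) = ((n + 3*(r+2) : ℕ) : ENNReal) := by
    push_cast; ring
  have e4 : (2 * ((r : ENNReal) + 2)) = ((2*(r+2) : ℕ) : ENNReal) := by push_cast; ring
  rw [e1, e2, e3, e4]
  rw [gt_iff_lt, ENNReal.div_lt_iff (Or.inl (by positivity)) (Or.inl (by finiteness)),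
    div_eq_mul_inv, mul_right_comm, ← div_eq_mul_inv,
    ENNReal.lt_div_iff_mul_lt (Or.inl (by positivity)) (Or.inl (by finiteness))]
  rw [← Nat.cast_mul, ← Nat.cast_mul, Nat.cast_lt]
  nlinarith

lemma card_le_two_of_subset_pair {α : Type*} [Finite α] {s : Set α} {a b : α}
    (hs : s ⊆ {a, b}) : Nat.card s ≤ 2 := by
  classical
  have hinj : Function.Injective (fun x : s => if (x : α) = a then (0 : Fin 2) else 1) := by
    rintro ⟨x, hx⟩ ⟨y, hy⟩ hxy
    simp only at hxy
    split_ifs at hxy with h1 h2 h2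
    · exact Subtype.ext (h1.trans h2.symm)
    · exact absurd hxy (by decide)
    · exact absurd hxy (by decide)
    · have hxb : x = b := (hs hx).resolve_left h1
      have hyb : y = b := (hs hy).resolve_left h2
      exact Subtype.ext (hxb.trans hyb.symm)
  simpa using Nat.card_le_card_of_injective _ hinj

lemma walk_closed {α : Type*} {F : SimpleGraph α} {s : Set α}
    (hcl : ∀ x ∈ s, ∀ y, F.Adj x y → y ∈ s) {a b : α} (p : F.Walk a b) (ha : a ∈ s) :
    b ∈ s := by
  induction p with
  | nil => exact ha
  | cons h q ih => exact ih (hcl _ ha _ h)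

lemma supp_subset_closed {α : Type*} {F : SimpleGraph α} {s : Set α}
    (hcl : ∀ x ∈ s, ∀ y, F.Adj x y → y ∈ s) {v : α} (hv : v ∈ s) :
    (F.connectedComponentMk v).supp ⊆ s := by
  intro w hw
  rw [SimpleGraph.ConnectedComponent.mem_supp_iff] at hw
  obtain ⟨p⟩ := (SimpleGraph.ConnectedComponent.exact hw).symm
  exact walk_closed hcl p hv

lemma comp_card_eq {α : Type*} [Finite α] {F : SimpleGraph α} {C : F.ConnectedComponent}
    {m : ℕ} (φ : F.induce C.supp ≃g SimpleGraph.pathGraph m) : Nat.card C.supp = m := by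
  simpa using Nat.card_congr φ.toEquiv

lemma path_exists_nbr {m : ℕ} (hm : 2 ≤ m) (j : Fin m) :
    ∃ j', (SimpleGraph.pathGraph m).Adj j j' := by
  by_cases h : j.val + 1 < m
  · exact ⟨⟨j.val + 1, h⟩, by rw [SimpleGraph.pathGraph_adj]; left; rfl⟩
  · have hlt := j.is_lt
    refine ⟨⟨j.val - 1, by omega⟩, ?_⟩
    rw [SimpleGraph.pathGraph_adj]
    right
    show j.val - 1 + 1 = j.val
    omega

lemma path_nbr_card {m : ℕ} (j : Fin m) :
    Nat.card {j' : Fin m // (SimpleGraph.pathGraph m).Adj j j'} ≤ 2 := by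
  have hinj : Function.Injective
      (fun x : {j' : Fin m // (SimpleGraph.pathGraph m).Adj j j'} =>
        if j.val + 1 = x.1.val then (0 : Fin 2) else 1) := by
    intro x y hxy
    have hx := SimpleGraph.pathGraph_adj.mp x.2
    have hy := SimpleGraph.pathGraph_adj.mp y.2
    simp only at hxy
    split_ifs at hxy with h1 h2 h2
    · exact Subtype.ext (Fin.ext (by omega))
    · exact absurd hxy (by decide)
    · exact absurd hxy (by decide)
    · exact Subtype.ext (Fin.ext (by omega))
  simpa using Nat.card_le_card_of_injective _ hinj

section FactorLemmas

variable {α : Type*} {F : SimpleGraph α}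

lemma factor_exists_nbr
    (hcomp : ∀ C : F.ConnectedComponent,
      ∃ m, 3 ≤ m ∧ Nonempty ((F.induce C.supp) ≃g SimpleGraph.pathGraph m))
    (v : α) : ∃ w, F.Adj v w := by
  obtain ⟨m, hm, ⟨φ⟩⟩ := hcomp (F.connectedComponentMk v)
  have hv : v ∈ (F.connectedComponentMk v).supp := by
    rw [SimpleGraph.ConnectedComponent.mem_supp_iff]
  obtain ⟨j', hj'⟩ := path_exists_nbr (by omega) (φ ⟨v, hv⟩)
  have : (F.induce _).Adj ⟨v, hv⟩ (φ.symm j') := by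
    rw [← φ.map_adj_iff, RelIso.apply_symm_apply]
    exact hj'
  exact ⟨(φ.symm j').1, this⟩

lemma factor_deg_le_two [Finite α]
    (hcomp : ∀ C : F.ConnectedComponent,
      ∃ m, 3 ≤ m ∧ Nonempty ((F.induce C.supp) ≃g SimpleGraph.pathGraph m))
    (v : α) : Nat.card {w : α // F.Adj v w} ≤ 2 := by
  obtain ⟨m, hm, ⟨φ⟩⟩ := hcomp (F.connectedComponentMk v)
  have hv : v ∈ (F.connectedComponentMk v).supp := by
    rw [SimpleGraph.ConnectedComponent.mem_supp_iff]
  have hmem : ∀ w : {w : α // F.Adj v w}, (w : α) ∈ (F.connectedComponentMk v).supp := by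
    rintro ⟨w, hw⟩
    rw [SimpleGraph.ConnectedComponent.mem_supp_iff]
    exact SimpleGraph.ConnectedComponent.sound hw.symm.reachable
  have hinj : Function.Injective
      (fun w : {w : α // F.Adj v w} =>
        (⟨φ ⟨w.1, hmem w⟩, by rw [φ.map_adj_iff]; exact w.2⟩ :
          {j' : Fin m // (SimpleGraph.pathGraph m).Adj (φ ⟨v, hv⟩) j'})) := by
    rintro ⟨x, hx⟩ ⟨y, hy⟩ hxy
    simp only [Subtype.mk.injEq] at hxy
    have h2 := φ.injective hxy
    have h3 : x = y := congrArg (fun z : ((F.connectedComponentMk v).supp : Set α) => z.1) h2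
    exact Subtype.ext h3
  exact le_trans (Nat.card_le_card_of_injective _ hinj) (path_nbr_card _)

end FactorLemmas

set_option maxHeartbeats 2000000 in
theorem part4 (n r : ℕ) (h : 1 ≤ n)
    (G : SimpleGraph (Fin (n + r + 1) ⊕ (Fin (2 * r + 2) × Fin 2)))
    (hG : G = graphJoin (⊤ : SimpleGraph (Fin (n + r + 1))) (copiesK2 (2 * r + 2))) :
    ¬ PathFactorCriticalAvoidable G 3 n := by
  subst hG
  set J := graphJoin (⊤ : SimpleGraph (Fin (n + r + 1))) (copiesK2 (2 * r + 2)) with hJ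
  intro hPFC
  set W : Set (V' n r) :=
    Set.range (fun i : Fin n => (Sum.inl (Fin.castLE (by omega) i) : V' n r)) with hW
  have hWcard : Nat.card W = n := by
    rw [hW, Nat.card_range_of_injective
      (fun a b hab => Fin.castLE_injective _ (Sum.inl_injective hab))]
    simp
  have hinrW : ∀ p : Fin (2*r+2) × Fin 2, (Sum.inr p : V' n r) ∈ Wᶜ := by
    rintro p ⟨i, hi⟩
    exact absurd hi (by simp)
  set xv : Fin (2*r+2) → Fin 2 → ↥(Wᶜ) := fun c i => ⟨Sum.inr (c,i), hinrW (c,i)⟩ with hxv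
  set c₀ : Fin (2*r+2) := ⟨0, by omega⟩ with hc₀
  set e : Sym2 ↥(Wᶜ) := s(xv c₀ 0, xv c₀ 1) with he'
  have he : e ∈ (J.induce (Wᶜ : Set (V' n r))).edgeSet := by
    rw [he', SimpleGraph.mem_edgeSet]
    show ((c₀ : Fin (2*r+2)) = c₀ ∧ (0 : Fin 2) ≠ 1)
    exact ⟨rfl, by decide⟩
  obtain ⟨F, hFle, hcomp⟩ := hPFC W hWcard e he
  have hFJ : ∀ {x y : ↥(Wᶜ)}, F.Adj x y → J.Adj x.1 y.1 :=
    fun hxy => (SimpleGraph.deleteEdges_adj.mp (hFle hxy)).1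
  have hne : ¬ F.Adj (xv c₀ 0) (xv c₀ 1) := by
    intro hadj
    exact (SimpleGraph.deleteEdges_adj.mp (hFle hadj)).2 rfl
  -- classification of neighbours of right vertices
  have hclass : ∀ (c : Fin (2*r+2)) (i : Fin 2) (y : ↥(Wᶜ)), F.Adj (xv c i) y →
      (∃ a, y.1 = Sum.inl a) ∨ y = xv c 0 ∨ y = xv c 1 := by
    intro c i y hadj
    have hJ' := hFJ hadj
    rcases hy : y.1 with a | ⟨c', i'⟩
    · exact Or.inl ⟨a, rfl⟩
    · right
      rw [hy] at hJ'
      have hcc : c = c' ∧ i ≠ i' := hJ'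
      fin_cases i'
      · exact Or.inl (Subtype.ext (by rw [hy, hcc.1]; rfl))
      · exact Or.inr (Subtype.ext (by rw [hy, hcc.1]; rfl))
  -- the type of left vertices
  set L := {l : ↥(Wᶜ) // ∃ a, l.1 = Sum.inl a} with hL
  have hLcard : Nat.card L ≤ r + 1 := by
    have haF : ∀ l : L, ∃ a, l.1.1 = Sum.inl a := fun l => l.2
    choose aF haF using haF
    have hge : ∀ l : L, n ≤ (aF l).val := by
      intro l
      by_contra hlt
      push_neg at hlt
      apply l.1.2
      refine ⟨⟨(aF l).val, hlt⟩, ?_⟩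
      rw [haF l]
      exact congrArg Sum.inl (Fin.ext rfl)
    have hinj : Function.Injective
        (fun l : L => (⟨(aF l).val - n, by have := (aF l).is_lt; omega⟩ : Fin (r+1))) := by
      intro l₁ l₂ h12
      have hv : (aF l₁).val - n = (aF l₂).val - n := congrArg Fin.val h12
      have h1 := hge l₁
      have h2 := hge l₂
      have : aF l₁ = aF l₂ := Fin.ext (by omega)
      apply Subtype.ext; apply Subtype.ext
      rw [haF l₁, haF l₂, this]
    have h3 := Nat.card_le_card_of_injective _ hinj
    rwa [Nat.card_eq_fintype_card (α := Fin (r+1)), Fintype.card_fin] at h3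
  -- each copy has a vertex with a left neighbour
  have hkey : ∀ c : Fin (2*r+2), ∃ (l : L) (i : Fin 2),
      F.Adj (l.1 : ↥(Wᶜ)) (xv c i) ∧ (c = c₀ → i = 0) := by
    intro c
    by_cases hc : c = c₀
    · subst hc
      obtain ⟨w, hw⟩ := factor_exists_nbr hcomp (xv c₀ 0)
      rcases hclass c₀ 0 w hw with ⟨a, ha⟩ | hw0 | hw1
      · exact ⟨⟨w, a, ha⟩, 0, hw.symm, fun _ => rfl⟩
      · rw [hw0] at hw; exact absurd hw (F.loopless.irrefl _)
      · rw [hw1] at hw; exact absurd hw hne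
    · have hclaim : ∃ (l : L) (i : Fin 2), F.Adj (l.1 : ↥(Wᶜ)) (xv c i) := by
        by_contra hno
        push_neg at hno
        have hcl : ∀ x ∈ ({xv c 0, xv c 1} : Set ↥(Wᶜ)), ∀ y, F.Adj x y →
            y ∈ ({xv c 0, xv c 1} : Set ↥(Wᶜ)) := by
          intro x hx y hxy
          have hxcase : x = xv c 0 ∨ x = xv c 1 := hx
          rcases hxcase with rfl | rfl
          · rcases hclass c 0 y hxy with ⟨a, ha⟩ | h0 | h0
            · exact absurd hxy.symm (hno ⟨y, a, ha⟩ 0)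
            · exact Or.inl h0
            · exact Or.inr h0
          · rcases hclass c 1 y hxy with ⟨a, ha⟩ | h0 | h0
            · exact absurd hxy.symm (hno ⟨y, a, ha⟩ 1)
            · exact Or.inl h0
            · exact Or.inr h0
        have hsupp := supp_subset_closed hcl (Set.mem_insert (xv c 0) _)
        obtain ⟨m, hm, ⟨φ⟩⟩ := hcomp (F.connectedComponentMk (xv c 0))
        have h1 : Nat.card (F.connectedComponentMk (xv c 0)).supp = m := comp_card_eq φ
        have h2 : Nat.card (F.connectedComponentMk (xv c 0)).supp ≤ 2 :=
          card_le_two_of_subset_pair hsupp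
        omega
      obtain ⟨l, i, hli⟩ := hclaim
      exact ⟨l, i, hli, fun hcc => absurd hcc hc⟩
  choose lC iC hC hC0 using hkey
  -- a left neighbour of the second vertex of copy c₀
  have hkey1 : ∃ l : L, F.Adj (l.1 : ↥(Wᶜ)) (xv c₀ 1) := by
    obtain ⟨w, hw⟩ := factor_exists_nbr hcomp (xv c₀ 1)
    rcases hclass c₀ 1 w hw with ⟨a, ha⟩ | hw0 | hw1
    · exact ⟨⟨w, a, ha⟩, hw.symm⟩
    · rw [hw0] at hw; exact absurd hw.symm hne
    · rw [hw1] at hw; exact absurd hw (F.loopless.irrefl _)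
  obtain ⟨l₁, hl₁⟩ := hkey1
  -- the injection into Σ l : L, neighbours of l
  have hΦinj : Function.Injective
      (fun x : Fin (2*r+2) ⊕ Unit =>
        (Sum.elim (fun c => ⟨lC c, ⟨xv c (iC c), hC c⟩⟩)
          (fun _ => ⟨l₁, ⟨xv c₀ 1, hl₁⟩⟩) x :
          Σ l : L, {w : ↥(Wᶜ) // F.Adj (l.1 : ↥(Wᶜ)) w})) := by
    rintro (c | u) (c' | u') hxy
    · have hg := congrArg (fun p : (Σ l : L, {w : ↥(Wᶜ) // F.Adj (l.1 : ↥(Wᶜ)) w}) =>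
        (p.2.1.1 : V' n r)) hxy
      simp only [hxv, Sum.elim_inl, Sum.inr.injEq, Prod.mk.injEq] at hg
      exact congrArg Sum.inl hg.1
    · have hg := congrArg (fun p : (Σ l : L, {w : ↥(Wᶜ) // F.Adj (l.1 : ↥(Wᶜ)) w}) =>
        (p.2.1.1 : V' n r)) hxy
      simp only [hxv, Sum.elim_inl, Sum.elim_inr, Sum.inr.injEq, Prod.mk.injEq] at hg
      exact absurd (hg.2 ▸ hC0 c hg.1) (by decide)
    · have hg := congrArg (fun p : (Σ l : L, {w : ↥(Wᶜ) // F.Adj (l.1 : ↥(Wᶜ)) w}) =>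
        (p.2.1.1 : V' n r)) hxy
      simp only [hxv, Sum.elim_inl, Sum.elim_inr, Sum.inr.injEq, Prod.mk.injEq] at hg
      exact absurd (hg.2 ▸ hC0 c' hg.1.symm) (by decide)
    · exact congrArg Sum.inr (Subsingleton.elim u u')
  -- embeddings of neighbour sets into Fin 2
  have hemb : ∀ l : L, Nonempty ({w : ↥(Wᶜ) // F.Adj (l.1 : ↥(Wᶜ)) w} ↪ Fin 2) := by
    intro l
    have hcard := factor_deg_le_two hcomp (l.1 : ↥(Wᶜ))
    have i1 := Fintype.ofFinite {w : ↥(Wᶜ) // F.Adj (l.1 : ↥(Wᶜ)) w}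
    apply Function.Embedding.nonempty_of_card_le
    rw [← Nat.card_eq_fintype_card, ← Nat.card_eq_fintype_card]
    simpa using hcard
  have emb := fun l : L => Classical.choice (hemb l)
  have hΨinj : Function.Injective
      (fun p : (Σ l : L, {w : ↥(Wᶜ) // F.Adj (l.1 : ↥(Wᶜ)) w}) =>
        ((p.1, emb p.1 p.2) : L × Fin 2)) := by
    rintro ⟨l, w⟩ ⟨l', w'⟩ hxy
    obtain rfl : l = l' := congrArg Prod.fst hxy
    have h2 : emb l w = emb l w' := congrArg Prod.snd hxy
    rw [(emb l).injective h2]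
  have hfinal := Nat.card_le_card_of_injective _ (hΨinj.comp hΦinj)
  rw [Nat.card_sum, Nat.card_prod] at hfinal
  have e1 : Nat.card (Fin (2*r+2)) = 2*r+2 := by simp
  have e2 : Nat.card Unit = 1 := by simp
  have e3 : Nat.card (Fin 2) = 2 := by simp
  rw [e1, e2, e3] at hfinal
  omega

/-- Remark 6: sharpness of the connectivity condition in Theorem 8. -/
theorem stmt12 (n r : ℕ) (h : 1 ≤ n)
    (G : SimpleGraph (Fin (n + r + 1) ⊕ (Fin (2 * r + 2) × Fin 2)))
    (hG : G = graphJoin (⊤ : SimpleGraph (Fin (n + r + 1))) (copiesK2 (2 * r + 2))) :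
    IsKConnected G (n + r + 1) ∧
    isolatedToughness G = ((n : ENNReal) + 3 * ((r : ENNReal) + 1)) / (2 * ((r : ENNReal) + 1)) ∧
    ((n : ENNReal) + 3 * ((r : ENNReal) + 1)) / (2 * ((r : ENNReal) + 1)) >
      ((n : ENNReal) + 3 * ((r : ENNReal) + 2)) / (2 * ((r : ENNReal) + 2)) ∧
    ¬ PathFactorCriticalAvoidable G 3 n := by
  exact ⟨part1 n r G hG, part2 n r G hG, part3 n r h, part4 n r h G hG⟩
end

section
/- Let G be a graph and e an edge of G. Then sun(G−e) + 1 ≥ sun(G) ≥ sun(G−e) − 2, where sun counts the number of sun components. -/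
open SimpleGraph

private lemma walk_key {V : Type*} (G : SimpleGraph V) (x y : V) {a b : V} (p : G.Walk a b) :
    (G.deleteEdges {s(x,y)}).Reachable a b ∨ (G.deleteEdges {s(x,y)}).Reachable a x ∨
      (G.deleteEdges {s(x,y)}).Reachable a y := by
  induction p with
  | nil => exact Or.inl (Reachable.refl _)
  | @cons a c b h p ih =>
    by_cases hc : s(a,c) = s(x,y)
    · rw [Sym2.eq_iff] at hc
      rcases hc with ⟨rfl, rfl⟩ | ⟨rfl, rfl⟩
      · exact Or.inr (Or.inl (Reachable.refl _))
      · exact Or.inr (Or.inr (Reachable.refl _))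
    · have h' : (G.deleteEdges {s(x,y)}).Adj a c := by
        simp only [deleteEdges_adj, Set.mem_singleton_iff]
        exact ⟨h, hc⟩
      rcases ih with h1 | h1 | h1
      · exact Or.inl (h'.reachable.trans h1)
      · exact Or.inr (Or.inl (h'.reachable.trans h1))
      · exact Or.inr (Or.inr (h'.reachable.trans h1))

private lemma not_reach_of_not_reach' {V : Type*} {G : SimpleGraph V} {x y w : V}
    (hx : ¬ (G.deleteEdges {s(x,y)}).Reachable w x)
    (hy : ¬ (G.deleteEdges {s(x,y)}).Reachable w y) {z : V}
    (hz : G.Reachable w z) : (G.deleteEdges {s(x,y)}).Reachable w z := by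
  obtain ⟨p⟩ := hz
  rcases walk_key G x y p with h | h | h
  · exact h
  · exact absurd h hx
  · exact absurd h hy

private lemma supp_eq_aux {V : Type*} {G : SimpleGraph V} {x y w : V}
    (hx : ¬ (G.deleteEdges {s(x,y)}).Reachable w x)
    (hy : ¬ (G.deleteEdges {s(x,y)}).Reachable w y) :
    (G.connectedComponentMk w).supp = ((G.deleteEdges {s(x,y)}).connectedComponentMk w).supp := by
  ext z
  simp only [ConnectedComponent.mem_supp_iff, ConnectedComponent.eq]
  constructor
  · intro h
    exact ((not_reach_of_not_reach' hx hy h.symm).symm)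
  · intro h
    exact h.mono (deleteEdges_le _)

private lemma x_notmem_supp {V : Type*} {G : SimpleGraph V} {x y w : V}
    (hx : ¬ (G.deleteEdges {s(x,y)}).Reachable w x)
    (hy : ¬ (G.deleteEdges {s(x,y)}).Reachable w y) :
    x ∉ (G.connectedComponentMk w).supp := by
  intro h
  rw [ConnectedComponent.mem_supp_iff, ConnectedComponent.eq] at h
  exact hx (not_reach_of_not_reach' hx hy h.symm)

private lemma induce_eq_aux {V : Type*} (G : SimpleGraph V) (x y : V) (S : Set V)
    (hx : x ∉ S) : G.induce S = (G.deleteEdges {s(x,y)}).induce S := by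
  ext ⟨a, ha⟩ ⟨b, hb⟩
  simp only [comap_adj, Function.Embedding.coe_subtype, deleteEdges_adj,
    Set.mem_singleton_iff]
  refine ⟨fun h => ⟨h, fun hc => ?_⟩, fun h => h.1⟩
  rw [Sym2.eq_iff] at hc
  rcases hc with ⟨rfl, rfl⟩ | ⟨rfl, rfl⟩
  · exact hx ha
  · exact hx hb

/-- `sun(G−e) + 1 ≥ sun(G) ≥ sun(G−e) − 2` for any edge `e` of `G`. -/
theorem stmt17 {V : Type*} [Fintype V] (G : SimpleGraph V)
    (e : Sym2 V) (he : e ∈ G.edgeSet) :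
    sunCount G ≤ sunCount (G.deleteEdges {e}) + 1 ∧
    sunCount (G.deleteEdges {e}) ≤ sunCount G + 2 := by
  classical
  induction e using Sym2.ind with
  | _ x y =>
  rw [mem_edgeSet] at he
  constructor
  · -- sunCount G ≤ sunCount G' + 1
    have hmk : ∀ C : G.ConnectedComponent, G.connectedComponentMk C.out = C :=
      fun C => C.out_eq
    set P := fun C : G.ConnectedComponent => IsSunGraph (G.induce C.supp) with hP
    set P' := fun C : (G.deleteEdges {s(x,y)}).ConnectedComponent =>
      IsSunGraph ((G.deleteEdges {s(x,y)}).induce C.supp) with hP'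
    have hnr : ∀ C : G.ConnectedComponent, x ∉ C.supp →
        ¬ (G.deleteEdges {s(x,y)}).Reachable C.out x ∧
        ¬ (G.deleteEdges {s(x,y)}).Reachable C.out y := by
      intro C hC
      have hGx : ¬ G.Reachable x C.out := by
        intro hr
        exact hC (by rw [ConnectedComponent.mem_supp_iff, ← hmk C,
          ConnectedComponent.eq]; exact hr.trans (Reachable.refl _))
      constructor
      · exact fun hr => hGx ((hr.mono (deleteEdges_le _)).symm)
      · exact fun hr => hGx (((hr.mono (deleteEdges_le _)).trans he.symm.reachable).symm)
    have hsun : ∀ C : G.ConnectedComponent, x ∉ C.supp → P C →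
        P' ((G.deleteEdges {s(x,y)}).connectedComponentMk C.out) := by
      intro C hC hPC
      obtain ⟨hx', hy'⟩ := hnr C hC
      have hsupp := supp_eq_aux hx' hy'
      have hxS := x_notmem_supp hx' hy'
      rw [← hmk C] at hPC
      rw [hP'] ; dsimp only
      rw [← hsupp, ← induce_eq_aux G x y _ hxS]
      exact hPC
    set F : {C : G.ConnectedComponent // P C} →
        {C : (G.deleteEdges {s(x,y)}).ConnectedComponent // P' C} ⊕ Unit :=
      fun c => if h : x ∈ c.1.supp then Sum.inr ()
        else Sum.inl ⟨(G.deleteEdges {s(x,y)}).connectedComponentMk c.1.out,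
          hsun c.1 h c.2⟩ with hF
    have hFinj : Function.Injective F := by
      intro c1 c2 hc
      rw [hF] at hc
      dsimp only at hc
      split_ifs at hc
      · rename_i h1 h2
        apply Subtype.ext
        rw [ConnectedComponent.mem_supp_iff] at h1 h2
        rw [← h1, ← h2]
      · simp only [Sum.inl.injEq, Subtype.mk.injEq, ConnectedComponent.eq] at hc
        apply Subtype.ext
        rw [← hmk c1.1, ← hmk c2.1, ConnectedComponent.eq]
        exact hc.mono (deleteEdges_le _)
    calc sunCount G ≤ Nat.card ({C : (G.deleteEdges {s(x,y)}).ConnectedComponent // P' C} ⊕ Unit) :=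
          Nat.card_le_card_of_injective F hFinj
      _ = sunCount (G.deleteEdges {s(x,y)}) + 1 := by
          rw [Nat.card_sum, hP']
          simp [sunCount]
  · -- sunCount G' ≤ sunCount G + 2
    have hmk : ∀ C : (G.deleteEdges {s(x,y)}).ConnectedComponent,
        (G.deleteEdges {s(x,y)}).connectedComponentMk C.out = C := fun C => C.out_eq
    set P := fun C : G.ConnectedComponent => IsSunGraph (G.induce C.supp) with hP
    set P' := fun C : (G.deleteEdges {s(x,y)}).ConnectedComponent =>
      IsSunGraph ((G.deleteEdges {s(x,y)}).induce C.supp) with hP'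
    have hnr : ∀ C : (G.deleteEdges {s(x,y)}).ConnectedComponent,
        x ∉ C.supp → y ∉ C.supp →
        ¬ (G.deleteEdges {s(x,y)}).Reachable C.out x ∧
        ¬ (G.deleteEdges {s(x,y)}).Reachable C.out y := by
      intro C hCx hCy
      constructor
      · intro hr
        exact hCx (by rw [ConnectedComponent.mem_supp_iff, ← hmk C,
          ConnectedComponent.eq]; exact hr.symm)
      · intro hr
        exact hCy (by rw [ConnectedComponent.mem_supp_iff, ← hmk C,
          ConnectedComponent.eq]; exact hr.symm)
    have hsun : ∀ C : (G.deleteEdges {s(x,y)}).ConnectedComponent,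
        x ∉ C.supp → y ∉ C.supp → P' C → P (G.connectedComponentMk C.out) := by
      intro C hCx hCy hPC
      obtain ⟨hx', hy'⟩ := hnr C hCx hCy
      have hsupp := supp_eq_aux hx' hy'
      have hxS := x_notmem_supp hx' hy'
      rw [← hmk C] at hPC
      rw [hP] ; dsimp only
      rw [induce_eq_aux G x y _ hxS, hsupp]
      exact hPC
    set F : {C : (G.deleteEdges {s(x,y)}).ConnectedComponent // P' C} →
        {C : G.ConnectedComponent // P C} ⊕ Fin 2 :=
      fun c => if h : x ∈ c.1.supp then Sum.inr 0
        else if h' : y ∈ c.1.supp then Sum.inr 1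
        else Sum.inl ⟨G.connectedComponentMk c.1.out, hsun c.1 h h' c.2⟩ with hF
    have hFinj : Function.Injective F := by
      intro c1 c2 hc
      rw [hF] at hc
      dsimp only at hc
      split_ifs at hc
      all_goals try exact absurd (Sum.inr.inj hc) (by decide)
      · rename_i h1 h2
        apply Subtype.ext
        rw [ConnectedComponent.mem_supp_iff] at h1 h2
        rw [← h1, ← h2]
      · rename_i hx1 hy1 hx2 hy2
        apply Subtype.ext
        rw [ConnectedComponent.mem_supp_iff] at hy1 hy2
        rw [← hy1, ← hy2]
      · rename_i hx1 hy1 hx2 hy2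
        simp only [Sum.inl.injEq, Subtype.mk.injEq, ConnectedComponent.eq] at hc
        apply Subtype.ext
        rw [← hmk c1.1, ← hmk c2.1, ConnectedComponent.eq]
        obtain ⟨hx', hy'⟩ := hnr c1.1 hx1 hy1
        exact not_reach_of_not_reach' hx' hy' hc
    calc sunCount (G.deleteEdges {s(x,y)})
        ≤ Nat.card ({C : G.ConnectedComponent // P C} ⊕ Fin 2) :=
          Nat.card_le_card_of_injective F hFinj
      _ = sunCount G + 2 := by
          rw [Nat.card_sum, hP]
          simp [sunCount, Nat.card_eq_fintype_card]
end
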